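/- arXiv:1909.04746 — 4 statements merged into one kernel-verified Lean document; each statement's English description precedes it below -/
import Mathlib

section
/- Under the Local SGD dynamics with identical data, if each stochastic gradient g_t^m satisfies E[g_t^m | x_t^1,...,x_t^M] = ∇f(x_t^m) and E[‖g_t^m - ∇f(x_t^m)‖² | x_t^1,...,x_t^M] ≤ σ², the stepsize satisfies 0 < γ ≤ 1/(2L), and consecutive synchronization times satisfy t_{p+1} - t_p ≤ H, then for all t ≥ 1 the expected iterate deviation satisfies E[V_t] ≤ (H-1) γ² σ², where V_t = (1/M) Σ_{m=1}^M ‖x_t^m - x̂_t‖² and x̂_t = (1/M) Σ_{m=1}^M x_t^m. -/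
open MeasureTheory ProbabilityTheory Finset
open scoped InnerProductSpace

/-- `f : ℝ^d → ℝ` is `L`-smooth and `μ`-strongly convex (`μ = 0` meaning merely convex),
witnessed by the gradient map `df`:
`(μ/2)‖x - y‖² ≤ f x - f y - ⟪df y, x - y⟫ ≤ (L/2)‖x - y‖²` for all `x, y`. -/
def SmoothSC {d : ℕ} (L μ : ℝ) (f : EuclideanSpace ℝ (Fin d) → ℝ)
    (df : EuclideanSpace ℝ (Fin d) → EuclideanSpace ℝ (Fin d)) : Prop :=
  ∀ x y : EuclideanSpace ℝ (Fin d),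
    μ / 2 * ‖x - y‖ ^ 2 ≤ f x - f y - ⟪df y, x - y⟫_ℝ ∧
    f x - f y - ⟪df y, x - y⟫_ℝ ≤ L / 2 * ‖x - y‖ ^ 2

/-- The Bregman divergence `D_f(x, y) = f x - f y - ⟪∇f y, x - y⟫` of `f`,
with gradient map `df`. -/
noncomputable def Breg {d : ℕ} (f : EuclideanSpace ℝ (Fin d) → ℝ)
    (df : EuclideanSpace ℝ (Fin d) → EuclideanSpace ℝ (Fin d))
    (x y : EuclideanSpace ℝ (Fin d)) : ℝ :=
  f x - f y - ⟪df y, x - y⟫_ℝ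


section Alg
variable {E : Type*} [NormedAddCommGroup E] [InnerProductSpace ℝ E]

lemma sum_sq_sub_avg_le {M : ℕ} (hM : 0 < M) (v : Fin M → E) (c : E) :
    ∑ m, ‖v m - (M : ℝ)⁻¹ • ∑ j, v j‖ ^ 2 ≤ ∑ m, ‖v m - c‖ ^ 2 := by
  set A : E := (M : ℝ)⁻¹ • ∑ j, v j with hA
  have hMne : (M : ℝ) ≠ 0 := Nat.cast_ne_zero.mpr hM.ne'
  have hsum : ∑ m, (v m - A) = 0 := by
    rw [Finset.sum_sub_distrib, Finset.sum_const, card_univ, Fintype.card_fin, hA,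
      ← Nat.cast_smul_eq_nsmul ℝ, smul_smul, mul_inv_cancel₀ hMne, one_smul, sub_self]
  have hid : ∀ m : Fin M, ‖v m - c‖ ^ 2
      = ‖v m - A‖ ^ 2 + 2 * ⟪v m - A, A - c⟫_ℝ + ‖A - c‖ ^ 2 := by
    intro m
    have : v m - c = (v m - A) + (A - c) := by abel
    rw [this, norm_add_sq_real]
  calc ∑ m, ‖v m - A‖ ^ 2 ≤ ∑ m, ‖v m - A‖ ^ 2
        + (2 * ⟪∑ m, (v m - A), A - c⟫_ℝ + (M : ℝ) * ‖A - c‖ ^ 2) := by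
        rw [hsum, inner_zero_left]
        have : (0:ℝ) ≤ (M : ℝ) * ‖A - c‖ ^ 2 := by positivity
        linarith
    _ = ∑ m, ‖v m - c‖ ^ 2 := by
        rw [sum_inner]
        simp_rw [hid, Finset.sum_add_distrib, Finset.mul_sum, Finset.sum_const, card_univ,
          Fintype.card_fin, nsmul_eq_mul]
        ring

end Alg


section Smooth
variable {d : ℕ} {L μ : ℝ} {f : EuclideanSpace ℝ (Fin d) → ℝ}
  {df : EuclideanSpace ℝ (Fin d) → EuclideanSpace ℝ (Fin d)}

lemma breg_lower (hL : 0 < L) (hμ : 0 ≤ μ) (hf : SmoothSC L μ f df)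
    (a b : EuclideanSpace ℝ (Fin d)) :
    1 / (2 * L) * ‖df a - df b‖ ^ 2 ≤ f a - f b - ⟪df b, a - b⟫_ℝ := by
  set u : EuclideanSpace ℝ (Fin d) := df a - df b with hu
  set z : EuclideanSpace ℝ (Fin d) := a - (1 / L) • u with hz
  have h1 : (0:ℝ) ≤ f z - f b - ⟪df b, z - b⟫_ℝ := by
    have := (hf z b).1
    nlinarith [sq_nonneg ‖z - b‖]
  have h2 : f z - f a - ⟪df a, z - a⟫_ℝ ≤ L / 2 * ‖z - a‖ ^ 2 := (hf z a).2
  have hza : z - a = -((1 / L) • u) := by rw [hz]; abel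
  have hnorm : ‖z - a‖ ^ 2 = (1 / L) ^ 2 * ‖u‖ ^ 2 := by
    rw [hza, norm_neg, norm_smul, mul_pow, Real.norm_eq_abs, sq_abs]
  have hinner_a : ⟪df a, z - a⟫_ℝ = -(1 / L) * ⟪df a, u⟫_ℝ := by
    rw [hza, inner_neg_right, real_inner_smul_right]; ring
  have hinner_b : ⟪df b, z - b⟫_ℝ = ⟪df b, a - b⟫_ℝ - (1 / L) * ⟪df b, u⟫_ℝ := by
    have : z - b = (a - b) - (1 / L) • u := by rw [hz]; abel
    rw [this, inner_sub_right, real_inner_smul_right]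
  have hud : ⟪df a, u⟫_ℝ - ⟪df b, u⟫_ℝ = ‖u‖ ^ 2 := by
    rw [hu, ← inner_sub_left, real_inner_self_eq_norm_sq]
  have hLne : L ≠ 0 := hL.ne'
  rw [hnorm, hinner_a] at h2
  rw [hinner_b] at h1
  have eA : 1 / L * ⟪df a, u⟫_ℝ - 1 / L * ⟪df b, u⟫_ℝ = 1 / L * ‖u‖ ^ 2 := by
    rw [← mul_sub, hud]
  have eB : L / 2 * ((1 / L) ^ 2 * ‖u‖ ^ 2) = 1 / L * ‖u‖ ^ 2 - 1 / (2 * L) * ‖u‖ ^ 2 := by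
    field_simp; ring
  linarith [h1, h2, eA, eB]

lemma cocoercive (hL : 0 < L) (hμ : 0 ≤ μ) (hf : SmoothSC L μ f df)
    (a b : EuclideanSpace ℝ (Fin d)) :
    1 / L * ‖df a - df b‖ ^ 2 ≤ ⟪df a - df b, a - b⟫_ℝ := by
  have h1 := breg_lower hL hμ hf a b
  have h2 := breg_lower hL hμ hf b a
  have hn : ‖df b - df a‖ = ‖df a - df b‖ := norm_sub_rev _ _
  have hi : ⟪df a - df b, a - b⟫_ℝ = ⟪df a, a - b⟫_ℝ - ⟪df b, a - b⟫_ℝ := by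
    rw [inner_sub_left]
  have hi2 : ⟪df a, b - a⟫_ℝ = -⟪df a, a - b⟫_ℝ := by
    rw [← inner_neg_right]; congr 1; abel
  rw [hn] at h2
  have hLpos : (0:ℝ) < 2 * L := by linarith
  have e : 1 / (2 * L) * ‖df a - df b‖ ^ 2 + 1 / (2 * L) * ‖df a - df b‖ ^ 2
      = 1 / L * ‖df a - df b‖ ^ 2 := by field_simp; ring
  linarith [h1, h2, e]

lemma df_lip (hL : 0 < L) (hμ : 0 ≤ μ) (hf : SmoothSC L μ f df)
    (a b : EuclideanSpace ℝ (Fin d)) : ‖df a - df b‖ ≤ L * ‖a - b‖ := by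
  rcases eq_or_ne (df a - df b) 0 with h | h
  · rw [h, norm_zero]; positivity
  · have hco := cocoercive hL hμ hf a b
    have hcs : ⟪df a - df b, a - b⟫_ℝ ≤ ‖df a - df b‖ * ‖a - b‖ := real_inner_le_norm _ _
    have hpos : 0 < ‖df a - df b‖ := norm_pos_iff.mpr h
    have h1 : 1 / L * ‖df a - df b‖ ^ 2 ≤ ‖df a - df b‖ * ‖a - b‖ := le_trans hco hcs
    rw [div_mul_eq_mul_div, one_mul, div_le_iff₀ hL] at h1
    nlinarith

lemma df_continuous (hL : 0 < L) (hμ : 0 ≤ μ) (hf : SmoothSC L μ f df) :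
    Continuous df := by
  have : LipschitzWith (Real.toNNReal L) df := by
    refine LipschitzWith.of_dist_le_mul fun a b => ?_
    rw [dist_eq_norm, dist_eq_norm, Real.coe_toNNReal L hL.le]
    exact df_lip hL hμ hf a b
  exact this.continuous

lemma nonexpansive {γ : ℝ} (hL : 0 < L) (hμ : 0 ≤ μ) (hf : SmoothSC L μ f df)
    (hγ0 : 0 < γ) (hγ : γ ≤ 1 / (2 * L)) (a b : EuclideanSpace ℝ (Fin d)) :
    ‖(a - γ • df a) - (b - γ • df b)‖ ^ 2 ≤ ‖a - b‖ ^ 2 := by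
  have hco := cocoercive hL hμ hf a b
  have hid : (a - γ • df a) - (b - γ • df b) = (a - b) - γ • (df a - df b) := by
    rw [smul_sub]; abel
  rw [hid, norm_sub_sq_real, real_inner_smul_right, norm_smul, Real.norm_eq_abs,
    abs_of_pos hγ0, mul_pow]
  have h2L : γ ≤ 1 / (2 * L) := hγ
  have hL2 : (0:ℝ) < 2 * L := by linarith
  have hγ2 : γ ≤ 2 / L := by
    refine le_trans h2L ?_
    rw [div_le_div_iff₀ hL2 hL]; nlinarith
  have hq2 : γ ^ 2 ≤ γ * (2 / L) := by
    rw [sq]; exact mul_le_mul_of_nonneg_left hγ2 hγ0.le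
  have hq : γ ^ 2 * ‖df a - df b‖ ^ 2 ≤ γ * (2 / L) * ‖df a - df b‖ ^ 2 :=
    mul_le_mul_of_nonneg_right hq2 (sq_nonneg _)
  have he : γ * (2 / L) * ‖df a - df b‖ ^ 2 = 2 * γ * (1 / L * ‖df a - df b‖ ^ 2) := by
    ring
  have hc2 : 2 * γ * (1 / L * ‖df a - df b‖ ^ 2) ≤ 2 * γ * ⟪df a - df b, a - b⟫_ℝ :=
    mul_le_mul_of_nonneg_left hco (by positivity)
  have hsym : ⟪a - b, df a - df b⟫_ℝ = ⟪df a - df b, a - b⟫_ℝ := real_inner_comm _ _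
  rw [hsym]
  linarith [hq, hc2, he]
end Smooth

lemma euclid_coord_abs_le {d : ℕ} (v : EuclideanSpace ℝ (Fin d)) (i : Fin d) :
    |v i| ≤ ‖v‖ := by
  rw [EuclideanSpace.norm_eq, ← Real.sqrt_sq_eq_abs (v i)]
  refine Real.sqrt_le_sqrt ?_
  calc v i ^ 2 = ‖v i‖ ^ 2 := by rw [Real.norm_eq_abs, sq_abs]
    _ ≤ ∑ j, ‖v j‖ ^ 2 :=
        Finset.single_le_sum (f := fun j => ‖v j‖ ^ 2) (fun j _ => by positivity) (mem_univ i)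

section Condexp
variable {α : Type*} {m m0 : MeasurableSpace α} {μ : Measure α}
  {E F : Type*} [NormedAddCommGroup E] [NormedSpace ℝ E] [CompleteSpace E]
  [NormedAddCommGroup F] [NormedSpace ℝ F] [CompleteSpace F]

/-- conditional expectation commutes with continuous linear maps. -/
lemma condexp_clm (hm : m ≤ m0) [SigmaFinite (μ.trim hm)] (T : E →L[ℝ] F)
    {f : α → E} (hf : Integrable f μ) :
    (fun ω => T ((μ[f|m]) ω)) =ᵐ[μ] μ[fun ω => T (f ω)|m] := by
  refine ae_eq_condExp_of_forall_setIntegral_eq hm (T.integrable_comp hf)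
    (fun s _ _ => (T.integrable_comp integrable_condExp).integrableOn)
    (fun s hs hμs => ?_) ?_
  · rw [T.integral_comp_comm integrable_condExp.integrableOn,
      T.integral_comp_comm hf.integrableOn, setIntegral_condExp hm hf hs]
  · exact StronglyMeasurable.aestronglyMeasurable (T.continuous.comp_stronglyMeasurable
      stronglyMeasurable_condExp)

/-- Key orthogonality: if `b` is `m`-strongly-measurable with `‖b‖²` integrable and
`ξ` is square-integrable with `μ[ξ|m] = 0` a.e., then `∫ ⟪b, ξ⟫ = 0`. -/
lemma integral_inner_eq_zero {d : ℕ} (hm : m ≤ m0) [SigmaFinite (μ.trim hm)]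
    {b ξ : α → EuclideanSpace ℝ (Fin d)}
    (hb : StronglyMeasurable[m] b) (hbm : AEStronglyMeasurable b μ)
    (hb2 : Integrable (fun ω => ‖b ω‖ ^ 2) μ)
    (hξm : AEStronglyMeasurable ξ μ)
    (hξ : Integrable ξ μ) (hξ2 : Integrable (fun ω => ‖ξ ω‖ ^ 2) μ)
    (h0 : μ[ξ|m] =ᵐ[μ] 0) :
    ∫ ω, ⟪b ω, ξ ω⟫_ℝ ∂μ = 0 := by
  have hint : ∀ i : Fin d, Integrable (fun ω => b ω i * ξ ω i) μ := by
    intro i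
    refine Integrable.mono' (((hb2.add hξ2).const_mul (1/2))) ?_ ?_
    · exact (((EuclideanSpace.proj (𝕜 := ℝ) i).continuous.comp_aestronglyMeasurable hbm).mul
        (((EuclideanSpace.proj (𝕜 := ℝ) i)).continuous.comp_aestronglyMeasurable hξm))
    · filter_upwards with ω
      have h1 : |b ω i| ≤ ‖b ω‖ := euclid_coord_abs_le _ i
      have h2 : |ξ ω i| ≤ ‖ξ ω‖ := euclid_coord_abs_le _ i
      have : ‖b ω i * ξ ω i‖ = |b ω i| * |ξ ω i| := by
        rw [Real.norm_eq_abs, abs_mul]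
      rw [this, Pi.add_apply]
      nlinarith [abs_nonneg (b ω i), abs_nonneg (ξ ω i), norm_nonneg (b ω),
        norm_nonneg (ξ ω), sq_nonneg (‖b ω‖ - ‖ξ ω‖)]
  have hpt : ∀ ω, ⟪b ω, ξ ω⟫_ℝ = ∑ i, b ω i * ξ ω i := by
    intro ω
    simp [PiLp.inner_apply, RCLike.inner_apply, map_sum, mul_comm]
  have hzero : ∀ i : Fin d, ∫ ω, b ω i * ξ ω i ∂μ = 0 := by
    intro i
    have hξi : Integrable (fun ω => ξ ω i) μ :=
      (EuclideanSpace.proj (𝕜 := ℝ) i).integrable_comp hξ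
    have hbi : StronglyMeasurable[m] (fun ω => b ω i) :=
      (EuclideanSpace.proj (𝕜 := ℝ) i).continuous.comp_stronglyMeasurable hb
    have hcond0 : μ[fun ω => ξ ω i|m] =ᵐ[μ] 0 := by
      refine (condexp_clm hm (EuclideanSpace.proj (𝕜 := ℝ) i) hξ).symm.trans ?_
      filter_upwards [h0] with ω hω
      simp [hω]
    have hpull : μ[(fun ω => b ω i) * (fun ω => ξ ω i)|m]
        =ᵐ[μ] (fun ω => b ω i) * μ[fun ω => ξ ω i|m] :=
      condExp_mul_of_stronglyMeasurable_left hbi (hint i) hξi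
    have : μ[(fun ω => b ω i) * (fun ω => ξ ω i)|m] =ᵐ[μ] 0 := by
      refine hpull.trans ?_
      filter_upwards [hcond0] with ω hω
      simp [Pi.mul_apply, hω]
    calc ∫ ω, b ω i * ξ ω i ∂μ
        = ∫ ω, (μ[(fun ω => b ω i) * (fun ω => ξ ω i)|m]) ω ∂μ :=
          (integral_condExp hm).symm
      _ = ∫ ω, (0 : α → ℝ) ω ∂μ := integral_congr_ae this
      _ = 0 := by simp
  calc ∫ ω, ⟪b ω, ξ ω⟫_ℝ ∂μ = ∫ ω, ∑ i, b ω i * ξ ω i ∂μ := by simp_rw [hpt]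
    _ = ∑ i, ∫ ω, b ω i * ξ ω i ∂μ := integral_finset_sum _ (fun i _ => hint i)
    _ = 0 := by simp [hzero]
end Condexp

noncomputable section

def avgE {d M : ℕ} (v : Fin M → EuclideanSpace ℝ (Fin d)) : EuclideanSpace ℝ (Fin d) :=
  (M : ℝ)⁻¹ • ∑ j, v j

def Wsum {d M : ℕ} (v : Fin M → EuclideanSpace ℝ (Fin d)) : ℝ :=
  ∑ m, ‖v m - avgE v‖ ^ 2

lemma Wsum_nonneg {d M : ℕ} (v : Fin M → EuclideanSpace ℝ (Fin d)) : 0 ≤ Wsum v :=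
  Finset.sum_nonneg fun m _ => by positivity

lemma avgE_const {d M : ℕ} (hM : 0 < M) (c : EuclideanSpace ℝ (Fin d)) :
    avgE (M := M) (fun _ => c) = c := by
  have hMne : (M : ℝ) ≠ 0 := Nat.cast_ne_zero.mpr hM.ne'
  rw [avgE, Finset.sum_const, card_univ, Fintype.card_fin, ← Nat.cast_smul_eq_nsmul ℝ, smul_smul,
    inv_mul_cancel₀ hMne, one_smul]

lemma Wsum_eq_zero {d M : ℕ} (hM : 0 < M) {v : Fin M → EuclideanSpace ℝ (Fin d)}
    (h : ∀ m m', v m = v m') : Wsum v = 0 := by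
  have hv : v = fun _ => v ⟨0, hM⟩ := funext fun m => h m _
  rw [Wsum]
  refine Finset.sum_eq_zero fun m _ => ?_
  rw [hv, avgE_const hM]
  simp

lemma integrable_inner_of_sq {α : Type*} {mα : MeasurableSpace α} {μ : Measure α}
    {E : Type*} [NormedAddCommGroup E] [InnerProductSpace ℝ E]
    {b ξ : α → E} (hbm : AEStronglyMeasurable b μ) (hξm : AEStronglyMeasurable ξ μ)
    (hb2 : Integrable (fun ω => ‖b ω‖ ^ 2) μ) (hξ2 : Integrable (fun ω => ‖ξ ω‖ ^ 2) μ) :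
    Integrable (fun ω => ⟪b ω, ξ ω⟫_ℝ) μ := by
  refine Integrable.mono' ((hb2.add hξ2).const_mul (1/2)) (hbm.inner hξm) ?_
  filter_upwards with ω
  rw [Real.norm_eq_abs, Pi.add_apply]
  have h := abs_real_inner_le_norm (b ω) (ξ ω)
  nlinarith [sq_nonneg (‖b ω‖ - ‖ξ ω‖)]

end


noncomputable section OneStep

lemma Wsum_le {d M : ℕ} (hM : 0 < M) (v : Fin M → EuclideanSpace ℝ (Fin d))
    (c : EuclideanSpace ℝ (Fin d)) : Wsum v ≤ ∑ m, ‖v m - c‖ ^ 2 :=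
  sum_sq_sub_avg_le hM v c

lemma meas_normsq_asm {Ω : Type*} {m0 : MeasurableSpace Ω} (P : Measure Ω) {d : ℕ}
    {h : Ω → EuclideanSpace ℝ (Fin d)} (hh : Measurable h) :
    AEStronglyMeasurable (fun ω => ‖h ω‖ ^ 2) P :=
  (hh.norm.pow_const 2).aestronglyMeasurable

lemma meas_asm_real {Ω : Type*} {m0 : MeasurableSpace Ω} (P : Measure Ω) {h : Ω → ℝ}
    (hh : Measurable h) : AEStronglyMeasurable h P :=
  hh.aestronglyMeasurable

variable {d M : ℕ} {Ω : Type*} [m0 : MeasurableSpace Ω]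

lemma onestep (hM : 0 < M) (P : Measure Ω) [IsProbabilityMeasure P]
    {L γ σ μ : ℝ} (hL : 0 < L) (hμ : 0 ≤ μ) (hσ : 0 ≤ σ) (hγ0 : 0 < γ) (hγ : γ ≤ 1 / (2 * L))
    {f : EuclideanSpace ℝ (Fin d) → ℝ} {df : EuclideanSpace ℝ (Fin d) → EuclideanSpace ℝ (Fin d)}
    (hf : SmoothSC L μ f df)
    (X G X' : Fin M → Ω → EuclideanSpace ℝ (Fin d))
    (hXmeas : ∀ m, Measurable (X m)) (hGmeas : ∀ m, Measurable (G m))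
    (hdyn : ∀ m ω, X' m ω = X m ω - γ • G m ω)
    (𝔾 : MeasurableSpace Ω) (h𝔾le : 𝔾 ≤ m0)
    (hXG : ∀ m, Measurable[𝔾] (X m))
    (hGint : ∀ m, Integrable (G m) P)
    (hvint : ∀ m, Integrable (fun ω => ‖G m ω - df (X m ω)‖ ^ 2) P)
    (hunbiased : ∀ m, P[G m | 𝔾] =ᵐ[P] fun ω => df (X m ω))
    (hvar : ∀ m, ∀ᵐ ω ∂P, (P[fun ω' => ‖G m ω' - df (X m ω')‖ ^ 2 | 𝔾]) ω ≤ σ ^ 2)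
    (hWint : Integrable (fun ω => Wsum (fun m => X m ω)) P) :
    Integrable (fun ω => Wsum (fun m => X' m ω)) P ∧
    ∫ ω, Wsum (fun m => X' m ω) ∂P ≤
      (∫ ω, Wsum (fun m => X m ω) ∂P) + M * (γ ^ 2 * σ ^ 2) := by
  have hdfc : Continuous df := df_continuous hL hμ hf
  have hMne : (M : ℝ) ≠ 0 := Nat.cast_ne_zero.mpr hM.ne'
  -- noise functions
  set ξ : Fin M → Ω → EuclideanSpace ℝ (Fin d) :=
    fun m ω => G m ω - df (X m ω) with hξdef
  have hξmeas : ∀ m, Measurable[m0] (ξ m) := by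
    intro m
    exact (hGmeas m).sub (hdfc.measurable.comp (hXmeas m))
  have hξsqint : ∀ m, Integrable (fun ω => ‖ξ m ω‖ ^ 2) P := fun m => hvint m
  have hξint : ∀ m, Integrable (ξ m) P := by
    intro m
    refine Integrable.mono' ((integrable_const (1:ℝ)).add (hξsqint m))
      (hξmeas m).aestronglyMeasurable ?_
    filter_upwards with ω
    rw [Pi.add_apply]
    nlinarith [norm_nonneg (ξ m ω), sq_nonneg (‖ξ m ω‖ - 1)]
  have hdfXint : ∀ m, Integrable (fun ω => df (X m ω)) P := by
    intro m
    have : (fun ω => df (X m ω)) = fun ω => G m ω - ξ m ω := by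
      funext ω; rw [hξdef]; module
    rw [this]
    exact (hGint m).sub (hξint m)
  have hdfXmeasG : ∀ m, StronglyMeasurable[𝔾] (fun ω => df (X m ω)) := fun m =>
    hdfc.comp_stronglyMeasurable (hXG m).stronglyMeasurable
  have hcond0 : ∀ m, P[ξ m | 𝔾] =ᵐ[P] 0 := by
    intro m
    have h1 : P[ξ m | 𝔾] =ᵐ[P] P[G m | 𝔾] - P[fun ω => df (X m ω) | 𝔾] :=
      condExp_sub (hGint m) (hdfXint m) _
    have h2 : P[fun ω => df (X m ω) | 𝔾] = fun ω => df (X m ω) :=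
      condExp_of_stronglyMeasurable h𝔾le (hdfXmeasG m) (hdfXint m)
    filter_upwards [h1, hunbiased m] with ω hω h2ω
    rw [hω, Pi.sub_apply, h2ω, h2]
    simp
  have hvarI : ∀ m, ∫ ω, ‖ξ m ω‖ ^ 2 ∂P ≤ σ ^ 2 := by
    intro m
    have h1 : ∫ ω, ‖ξ m ω‖ ^ 2 ∂P
        = ∫ ω, (P[fun ω' => ‖G m ω' - df (X m ω')‖ ^ 2 | 𝔾]) ω ∂P :=
      (integral_condExp h𝔾le).symm
    rw [h1]
    calc ∫ ω, (P[fun ω' => ‖G m ω' - df (X m ω')‖ ^ 2 | 𝔾]) ω ∂P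
        ≤ ∫ _, σ ^ 2 ∂P := integral_mono_ae integrable_condExp (integrable_const _) (hvar m)
      _ = σ ^ 2 := by simp
  -- deterministic and noise parts
  set a : Fin M → Ω → EuclideanSpace ℝ (Fin d) := fun m ω =>
    (X m ω - γ • df (X m ω)) - avgE (fun j => X j ω - γ • df (X j ω)) with hadef
  set e : Fin M → Ω → EuclideanSpace ℝ (Fin d) := fun m ω =>
    ξ m ω - avgE (fun j => ξ j ω) with hedef
  have hdecomp : ∀ m ω, X' m ω - avgE (fun j => X' j ω) = a m ω - γ • e m ω := by
    intro m ω
    simp only [hadef, hedef, hξdef, avgE]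
    simp only [hdyn]
    simp only [Finset.sum_sub_distrib, ← Finset.smul_sum]
    module
  -- norm expansion
  have hW'ω : ∀ ω, Wsum (fun m => X' m ω)
      = ∑ m, (‖a m ω‖ ^ 2 - 2 * γ * ⟪a m ω, e m ω⟫_ℝ + γ ^ 2 * ‖e m ω‖ ^ 2) := by
    intro ω
    rw [Wsum]
    refine Finset.sum_congr rfl fun m _ => ?_
    rw [hdecomp m ω, norm_sub_sq_real, real_inner_smul_right, norm_smul,
      Real.norm_eq_abs, mul_pow, sq_abs]
    ring
  -- measurability of a, e
  have hTmeas : ∀ (mm : MeasurableSpace Ω), (∀ j, Measurable[mm] (X j)) →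
      ∀ j, Measurable[mm] (fun ω => X j ω - γ • df (X j ω)) := by
    intro mm hX j
    exact (hX j).sub ((hdfc.measurable.comp (hX j)).const_smul γ)
  have hameas : ∀ m, Measurable[m0] (a m) := by
    intro m
    rw [hadef]
    simp only [avgE]
    exact (hTmeas m0 hXmeas m).sub
      ((Finset.measurable_sum univ fun j _ => hTmeas m0 hXmeas j).const_smul ((M : ℝ)⁻¹))
  have haGmeas : ∀ m, StronglyMeasurable[𝔾] (a m) := by
    intro m
    refine Measurable.stronglyMeasurable ?_
    rw [hadef]
    simp only [avgE]
    exact (hTmeas 𝔾 hXG m).sub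
      ((Finset.measurable_sum univ fun j _ => hTmeas 𝔾 hXG j).const_smul ((M : ℝ)⁻¹))
  have hemeas : ∀ m, Measurable[m0] (e m) := by
    intro m
    rw [hedef]
    simp only [avgE]
    exact (hξmeas m).sub ((Finset.measurable_sum univ fun j _ => hξmeas j).const_smul ((M : ℝ)⁻¹))
  -- pointwise bounds
  have hAle : ∀ ω, ∑ m, ‖a m ω‖ ^ 2 ≤ Wsum (fun m => X m ω) := by
    intro ω
    have h1 : ∑ m, ‖a m ω‖ ^ 2 ≤ ∑ m, ‖(X m ω - γ • df (X m ω))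
        - (avgE (fun j => X j ω) - γ • df (avgE (fun j => X j ω)))‖ ^ 2 :=
      Wsum_le hM (fun j => X j ω - γ • df (X j ω)) _
    refine h1.trans ?_
    rw [Wsum]
    exact Finset.sum_le_sum fun m _ =>
      nonexpansive hL hμ hf hγ0 hγ (X m ω) (avgE (fun j => X j ω))
  have hEle : ∀ ω, ∑ m, ‖e m ω‖ ^ 2 ≤ ∑ m, ‖ξ m ω‖ ^ 2 := by
    intro ω
    have h1 : ∑ m, ‖e m ω‖ ^ 2 ≤ ∑ m, ‖ξ m ω - 0‖ ^ 2 :=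
      Wsum_le hM (fun j => ξ j ω) 0
    simpa using h1
  -- integrability of squares
  have haint : ∀ m, Integrable (fun ω => ‖a m ω‖ ^ 2) P := by
    intro m
    refine Integrable.mono' hWint
      (meas_normsq_asm P (hameas m)) ?_
    filter_upwards with ω
    rw [Real.norm_eq_abs, abs_of_nonneg (by positivity)]
    refine le_trans ?_ (hAle ω)
    exact Finset.single_le_sum (f := fun m' => ‖a m' ω‖ ^ 2)
      (fun j _ => by positivity) (mem_univ m)
  have hΞint : Integrable (fun ω => ∑ m, ‖ξ m ω‖ ^ 2) P :=
    integrable_finset_sum _ fun m _ => hξsqint m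
  have hesqint : ∀ m, Integrable (fun ω => ‖e m ω‖ ^ 2) P := by
    intro m
    refine Integrable.mono' hΞint (meas_normsq_asm P (hemeas m)) ?_
    filter_upwards with ω
    rw [Real.norm_eq_abs, abs_of_nonneg (by positivity)]
    refine le_trans ?_ (hEle ω)
    exact Finset.single_le_sum (f := fun m' => ‖e m' ω‖ ^ 2)
      (fun j _ => by positivity) (mem_univ m)
  -- cross terms
  have hinner_int : ∀ m j, Integrable (fun ω => ⟪a m ω, ξ j ω⟫_ℝ) P := fun m j =>
    integrable_inner_of_sq (μ := P) (hameas m).aestronglyMeasurable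
      (hξmeas j).aestronglyMeasurable (haint m) (hξsqint j)
  have hinner_e_int : ∀ m, Integrable (fun ω => ⟪a m ω, e m ω⟫_ℝ) P := fun m =>
    integrable_inner_of_sq (μ := P) (hameas m).aestronglyMeasurable
      (hemeas m).aestronglyMeasurable (haint m) (hesqint m)
  have hcross0 : ∀ m j, ∫ ω, ⟪a m ω, ξ j ω⟫_ℝ ∂P = 0 := by
    intro m j
    exact integral_inner_eq_zero h𝔾le (haGmeas m) (hameas m).aestronglyMeasurable
      (haint m) (hξmeas j).aestronglyMeasurable (hξint j) (hξsqint j) (hcond0 j)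
  have hcross : ∀ m, ∫ ω, ⟪a m ω, e m ω⟫_ℝ ∂P = 0 := by
    intro m
    have hpt : ∀ ω, ⟪a m ω, e m ω⟫_ℝ
        = ⟪a m ω, ξ m ω⟫_ℝ - (M : ℝ)⁻¹ * ∑ j, ⟪a m ω, ξ j ω⟫_ℝ := by
      intro ω
      rw [hedef]
      simp only [avgE]
      rw [inner_sub_right, real_inner_smul_right, inner_sum]
    have hsum_int : Integrable (fun ω => (M : ℝ)⁻¹ * ∑ j, ⟪a m ω, ξ j ω⟫_ℝ) P :=
      (integrable_finset_sum _ fun j _ => hinner_int m j).const_mul _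
    calc ∫ ω, ⟪a m ω, e m ω⟫_ℝ ∂P
        = ∫ ω, (⟪a m ω, ξ m ω⟫_ℝ - (M : ℝ)⁻¹ * ∑ j, ⟪a m ω, ξ j ω⟫_ℝ) ∂P := by
          exact integral_congr_ae (Filter.Eventually.of_forall hpt)
      _ = (∫ ω, ⟪a m ω, ξ m ω⟫_ℝ ∂P)
            - ∫ ω, (M : ℝ)⁻¹ * ∑ j, ⟪a m ω, ξ j ω⟫_ℝ ∂P :=
          integral_sub (hinner_int m m) hsum_int
      _ = 0 := by
          rw [hcross0 m m, integral_const_mul, integral_finset_sum _ fun j _ => hinner_int m j,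
            Finset.sum_eq_zero fun j _ => hcross0 m j]
          ring
  -- assemble
  have hW'fun : (fun ω => Wsum (fun m => X' m ω))
      = fun ω => ∑ m, (‖a m ω‖ ^ 2 - 2 * γ * ⟪a m ω, e m ω⟫_ℝ + γ ^ 2 * ‖e m ω‖ ^ 2) :=
    funext hW'ω
  have hterm_int : ∀ m, Integrable
      (fun ω => ‖a m ω‖ ^ 2 - 2 * γ * ⟪a m ω, e m ω⟫_ℝ + γ ^ 2 * ‖e m ω‖ ^ 2) P := fun m =>
    ((haint m).sub ((hinner_e_int m).const_mul (2 * γ))).add ((hesqint m).const_mul (γ ^ 2))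
  have hW'int : Integrable (fun ω => Wsum (fun m => X' m ω)) P := by
    rw [hW'fun]
    exact integrable_finset_sum _ fun m _ => hterm_int m
  refine ⟨hW'int, ?_⟩
  have hsplit : ∫ ω, Wsum (fun m => X' m ω) ∂P
      = (∑ m, ∫ ω, ‖a m ω‖ ^ 2 ∂P) + γ ^ 2 * ∑ m, ∫ ω, ‖e m ω‖ ^ 2 ∂P := by
    rw [hW'fun, integral_finset_sum _ fun m _ => hterm_int m]
    rw [Finset.mul_sum, ← Finset.sum_add_distrib]
    refine Finset.sum_congr rfl fun m _ => ?_
    have h1 : Integrable (fun ω => ‖a m ω‖ ^ 2 - 2 * γ * ⟪a m ω, e m ω⟫_ℝ) P :=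
      (haint m).sub ((hinner_e_int m).const_mul (2 * γ))
    have h2 : Integrable (fun ω => γ ^ 2 * ‖e m ω‖ ^ 2) P := (hesqint m).const_mul (γ ^ 2)
    have h3 : Integrable (fun ω => 2 * γ * ⟪a m ω, e m ω⟫_ℝ) P :=
      (hinner_e_int m).const_mul (2 * γ)
    rw [integral_add h1 h2, integral_sub (haint m) h3, integral_const_mul, integral_const_mul,
      hcross m]
    ring
  rw [hsplit]
  have hbound1 : ∑ m, ∫ ω, ‖a m ω‖ ^ 2 ∂P ≤ ∫ ω, Wsum (fun m => X m ω) ∂P := by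
    rw [← integral_finset_sum _ fun m _ => haint m]
    exact integral_mono (integrable_finset_sum _ fun m _ => haint m) hWint hAle
  have hbound2 : ∑ m, ∫ ω, ‖e m ω‖ ^ 2 ∂P ≤ M * σ ^ 2 := by
    calc ∑ m, ∫ ω, ‖e m ω‖ ^ 2 ∂P
        = ∫ ω, ∑ m, ‖e m ω‖ ^ 2 ∂P := (integral_finset_sum _ fun m _ => hesqint m).symm
      _ ≤ ∫ ω, ∑ m, ‖ξ m ω‖ ^ 2 ∂P :=
          integral_mono (integrable_finset_sum _ fun m _ => hesqint m) hΞint hEle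
      _ = ∑ m, ∫ ω, ‖ξ m ω‖ ^ 2 ∂P := integral_finset_sum _ fun m _ => hξsqint m
      _ ≤ ∑ _m : Fin M, σ ^ 2 := Finset.sum_le_sum fun m _ => hvarI m
      _ = M * σ ^ 2 := by rw [Finset.sum_const, card_univ, Fintype.card_fin, nsmul_eq_mul]
  have hγ2 : (0:ℝ) ≤ γ ^ 2 := sq_nonneg γ
  nlinarith [hbound1, hbound2]

end OneStep

/-- bound on the expected iterate deviation `E[V_t] ≤ (H-1)γ²σ²`. -/
theorem iterate_variance_bound {d M H : ℕ} (hM : 0 < M) (hH : 1 ≤ H)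
    {Ω : Type*} [MeasurableSpace Ω] [StandardBorelSpace Ω]
    (P : Measure Ω) [IsProbabilityMeasure P]
    (L γ σ : ℝ) (hL : 0 < L) (μ : ℝ) (hμ : 0 ≤ μ)
    (hσ : 0 ≤ σ)
    (hγ0 : 0 < γ) (hγ : γ ≤ 1 / (2 * L))
    (f : EuclideanSpace ℝ (Fin d) → ℝ) (df : EuclideanSpace ℝ (Fin d) → EuclideanSpace ℝ (Fin d)) (hf : SmoothSC L μ f df)
    (xstar : EuclideanSpace ℝ (Fin d)) (hmin : ∀ y, f xstar ≤ f y)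
    -- local iterates and stochastic gradients of Local SGD
    (x g : ℕ → Fin M → Ω → EuclideanSpace ℝ (Fin d)) (x0 : EuclideanSpace ℝ (Fin d))
    (hx0 : ∀ m ω, x 0 m ω = x0)
    (hxmeas : ∀ t m, Measurable (x t m)) (hgmeas : ∀ t m, Measurable (g t m))
    -- synchronization times `s 0 = 0 < s 1 < s 2 < ⋯` with gaps at most `H`
    (s : ℕ → ℕ) (hs0 : s 0 = 0) (hsmono : StrictMono s)
    (hgap : ∀ p, s (p + 1) ≤ s p + H)
    -- Local SGD dynamics
    (hsync : ∀ t m ω, (∃ p, s p = t + 1) →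
      x (t + 1) m ω = (M : ℝ)⁻¹ • ∑ j, (x t j ω - γ • g t j ω))
    (hlocal : ∀ t m ω, ¬(∃ p, s p = t + 1) →
      x (t + 1) m ω = x t m ω - γ • g t m ω)
    -- the σ-algebra generated by the iterates at time `t`
    (𝔾 : ℕ → MeasurableSpace Ω)
    (h𝔾 : ∀ t, 𝔾 t = MeasurableSpace.comap (fun ω => fun m => x t m ω) inferInstance)
    (h𝔾le : ∀ t, 𝔾 t ≤ ‹MeasurableSpace Ω›)
    -- the stochastic gradients are conditionally unbiased with variance at most σ²
    (hgint : ∀ t m, Integrable (g t m) P)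
    (hvint : ∀ t m, Integrable (fun ω => ‖g t m ω - df (x t m ω)‖ ^ 2) P)
    (hunbiased : ∀ t m, P[g t m | 𝔾 t] =ᵐ[P] fun ω => df (x t m ω))
    (hvar : ∀ t m, ∀ᵐ ω ∂P,
      (P[fun ω' => ‖g t m ω' - df (x t m ω')‖ ^ 2 | 𝔾 t]) ω ≤ σ ^ 2)
    -- the stochastic gradients are independent across nodes given the current iterates
    (hci : ∀ t, iCondIndepFun (𝔾 t) (h𝔾le t) (g t) P) :
    ∀ t : ℕ, 1 ≤ t →
      (∫ ω, (M : ℝ)⁻¹ * ∑ m, ‖x t m ω - (M : ℝ)⁻¹ • ∑ j, x t j ω‖ ^ 2 ∂P) ≤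
        ((H : ℝ) - 1) * γ ^ 2 * σ ^ 2 := by
  intro t ht
  have hMne : (M : ℝ) ≠ 0 := Nat.cast_ne_zero.mpr hM.ne'
  -- measurability of the iterates w.r.t. the generated σ-algebras
  have hxG : ∀ u m, Measurable[𝔾 u] (x u m) := by
    intro u m
    rw [h𝔾 u]
    have h1 : Measurable[MeasurableSpace.comap (fun ω => fun m => x u m ω) inferInstance]
        (fun ω => fun m => x u m ω) := measurable_iff_comap_le.mpr le_rfl
    exact (measurable_pi_apply m).comp h1
  -- at time 0 and at synchronization times, all local iterates agree
  have hsynczero : ∀ u, (u = 0 ∨ ∃ p, s p = u) → ∀ ω,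
      Wsum (fun m => x u m ω) = 0 := by
    intro u hu ω
    refine Wsum_eq_zero hM fun m m' => ?_
    match u, hu with
    | 0, _ => rw [hx0, hx0]
    | (v+1), Or.inr hp => rw [hsync v m ω hp, hsync v m' ω hp]
  -- the main induction within a synchronization window
  have main : ∀ (n p : ℕ), s p + n < s (p + 1) →
      Integrable (fun ω => Wsum (fun m => x (s p + n) m ω)) P ∧
      ∫ ω, Wsum (fun m => x (s p + n) m ω) ∂P ≤ (n : ℝ) * (M * (γ ^ 2 * σ ^ 2)) := by
    intro n
    induction n with
    | zero =>
      intro p _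
      have hz : (fun ω => Wsum (fun m => x (s p + 0) m ω)) = fun _ => (0:ℝ) := by
        funext ω
        rw [Nat.add_zero]
        exact hsynczero (s p) (Or.inr ⟨p, rfl⟩) ω
      constructor
      · rw [hz]; exact integrable_const 0
      · rw [hz]; simp
    | succ n ih =>
      intro p hlt
      have hlt' : s p + n < s (p + 1) := lt_trans (by omega) hlt
      obtain ⟨ih_int, ih_bd⟩ := ih p hlt'
      set t0 := s p + n with ht0
      have hnotsync : ¬∃ q, s q = t0 + 1 := by
        rintro ⟨q, hq⟩
        rcases lt_or_ge q (p + 1) with h | h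
        · have : s q ≤ s p := hsmono.monotone (by omega)
          omega
        · have : s (p + 1) ≤ s q := hsmono.monotone h
          omega
      have hdyn : ∀ m ω, x (t0 + 1) m ω = x t0 m ω - γ • g t0 m ω :=
        fun m ω => hlocal t0 m ω hnotsync
      obtain ⟨hint', hbd'⟩ := onestep hM P hL hμ hσ hγ0 hγ hf
        (x t0) (g t0) (x (t0 + 1)) (hxmeas t0) (hgmeas t0) hdyn
        (𝔾 t0) (h𝔾le t0) (hxG t0) (hgint t0) (hvint t0) (hunbiased t0) (hvar t0) ih_int
      have heq : s p + (n + 1) = t0 + 1 := by omega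
      rw [heq]
      refine ⟨hint', hbd'.trans ?_⟩
      push_cast
      nlinarith [ih_bd, sq_nonneg γ, sq_nonneg σ, (by positivity : (0:ℝ) ≤ (M:ℝ))]
  -- locate `t` within a synchronization window
  have hex : ∃ q, t < s q := ⟨t + 1, lt_of_lt_of_le (Nat.lt_succ_self t) hsmono.le_apply⟩
  obtain ⟨q, hq, hqmin⟩ : ∃ q, t < s q ∧ ∀ r, r < q → ¬ t < s r :=
    ⟨Nat.find hex, Nat.find_spec hex, fun r hr => Nat.find_min hex hr⟩
  have hq0 : q ≠ 0 := by
    intro h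
    rw [h, hs0] at hq
    omega
  obtain ⟨p, rfl⟩ : ∃ p, q = p + 1 := ⟨q - 1, by omega⟩
  have hple : s p ≤ t := by
    by_contra h
    exact hqmin p (by omega) (by omega)
  set n := t - s p with hn
  have htn : s p + n = t := by omega
  have hlt : s p + n < s (p + 1) := by omega
  obtain ⟨hint, hbd⟩ := main n p hlt
  rw [htn] at hbd
  -- conclude
  have hgoal : (∫ ω, (M : ℝ)⁻¹ * ∑ m, ‖x t m ω - (M : ℝ)⁻¹ • ∑ j, x t j ω‖ ^ 2 ∂P)
      = (M : ℝ)⁻¹ * ∫ ω, Wsum (fun m => x t m ω) ∂P := by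
    rw [← integral_const_mul]
    rfl
  rw [hgoal]
  have hnH : (n : ℝ) ≤ (H : ℝ) - 1 := by
    have h1 : n + 1 ≤ H := by
      have := hgap p
      omega
    have : ((n + 1 : ℕ) : ℝ) ≤ (H : ℝ) := Nat.cast_le.mpr h1
    push_cast at this
    linarith
  have hW0 : 0 ≤ ∫ ω, Wsum (fun m => x t m ω) ∂P :=
    integral_nonneg fun ω => Wsum_nonneg _
  have hMpos : (0:ℝ) < (M : ℝ) := by positivity
  calc (M : ℝ)⁻¹ * ∫ ω, Wsum (fun m => x t m ω) ∂P
      ≤ (M : ℝ)⁻¹ * ((n : ℝ) * (M * (γ ^ 2 * σ ^ 2))) := by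
        apply mul_le_mul_of_nonneg_left hbd (by positivity)
    _ = (n : ℝ) * (γ ^ 2 * σ ^ 2) := by field_simp
    _ ≤ ((H : ℝ) - 1) * γ ^ 2 * σ ^ 2 := by nlinarith [hnH, mul_nonneg (sq_nonneg γ) (sq_nonneg σ)]
end

section
/- Let f : ℝ^d → ℝ be written as f(x) = E_{z∼D_m}[f(x,z)] for each m, with f(·,z) almost surely L-smooth and convex, and let x_* be a minimizer of f. Let x^1, ..., x^M ∈ ℝ^d be arbitrary points and let z_1, ..., z_M be independent with z_m ∼ D_m. Then E‖(1/M) Σ_{m=1}^M (∇f(x^m, z_m) - ∇f(x^m))‖² ≤ 2σ_opt²/M + (4L/M²) Σ_{m=1}^M D_f(x^m, x_*), where σ_opt² = (1/M) Σ_m E_{z_m∼D_m}‖∇f(x_*, z_m)‖² and D_f(x,y) = f(x) - f(y) - ⟨∇f(y), x - y⟩. -/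
open MeasureTheory ProbabilityTheory Finset
open scoped InnerProductSpace

lemma coco {d : ℕ} {L : ℝ} (hL : 0 < L) {g : EuclideanSpace ℝ (Fin d) → ℝ}
    {dg : EuclideanSpace ℝ (Fin d) → EuclideanSpace ℝ (Fin d)}
    (h : SmoothSC L 0 g dg) (x y : EuclideanSpace ℝ (Fin d)) :
    ‖dg x - dg y‖ ^ 2 ≤ 2 * L * (g x - g y - ⟪dg y, x - y⟫_ℝ) := by
  set u := dg x - dg y with hu
  set w := x - L⁻¹ • u with hw
  have h1 := (h w y).1
  have h2 := (h w x).2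
  have hwx : w - x = -(L⁻¹ • u) := by rw [hw]; abel
  have hnorm : ‖w - x‖ ^ 2 = L⁻¹ ^ 2 * ‖u‖ ^ 2 := by
    rw [hwx, norm_neg, norm_smul, mul_pow, Real.norm_eq_abs, sq_abs]
  have hinner : ⟪dg x, w - x⟫_ℝ = -(L⁻¹ * ⟪dg x, u⟫_ℝ) := by
    rw [hwx, inner_neg_right, real_inner_smul_right]
  have hinner2 : ⟪dg y, w - y⟫_ℝ = ⟪dg y, x - y⟫_ℝ - L⁻¹ * ⟪dg y, u⟫_ℝ := by
    have : w - y = (x - y) - L⁻¹ • u := by rw [hw]; abel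
    rw [this, inner_sub_right, real_inner_smul_right]
  have key : ⟪dg x, u⟫_ℝ - ⟪dg y, u⟫_ℝ = ‖u‖ ^ 2 := by
    rw [hu, ← inner_sub_left, real_inner_self_eq_norm_sq]
  rw [hinner2] at h1
  rw [hinner, hnorm] at h2
  simp only [zero_div, zero_mul] at h1
  have hL' : L ≠ 0 := ne_of_gt hL
  have e1 : L / 2 * (L⁻¹ ^ 2 * ‖u‖ ^ 2) = ‖u‖ ^ 2 / (2 * L) := by
    field_simp
  have e2 : L⁻¹ * ⟪dg x, u⟫_ℝ - L⁻¹ * ⟪dg y, u⟫_ℝ = ‖u‖ ^ 2 / L := by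
    rw [← mul_sub, key, inv_mul_eq_div]
  have e3 : ‖u‖ ^ 2 / L - ‖u‖ ^ 2 / (2 * L) = ‖u‖ ^ 2 / (2 * L) := by
    field_simp; ring
  rw [e1] at h2
  have h4 : ‖u‖ ^ 2 / (2 * L) ≤ g x - g y - ⟪dg y, x - y⟫_ℝ := by linarith
  have h5 : ‖u‖ ^ 2 = 2 * L * (‖u‖ ^ 2 / (2 * L)) := by field_simp
  rw [h5]
  exact mul_le_mul_of_nonneg_left h4 (by positivity)

lemma norm_sq_eq_sum {d : ℕ} (v : EuclideanSpace ℝ (Fin d)) :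
    ‖v‖ ^ 2 = ∑ i, v i ^ 2 := by
  rw [EuclideanSpace.norm_eq, Real.sq_sqrt (by positivity)]
  simp [Real.norm_eq_abs, sq_abs]

lemma sq_norm_le_two {E : Type*} [NormedAddCommGroup E] (a b : E) :
    ‖a‖ ^ 2 ≤ 2 * ‖a - b‖ ^ 2 + 2 * ‖b‖ ^ 2 := by
  have h : ‖a‖ ≤ ‖a - b‖ + ‖b‖ := by
    calc ‖a‖ = ‖a - b + b‖ := by rw [sub_add_cancel]
    _ ≤ ‖a - b‖ + ‖b‖ := norm_add_le _ _
  have h2 : ‖a‖ ^ 2 ≤ (‖a - b‖ + ‖b‖) ^ 2 := by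
    exact pow_le_pow_left₀ (norm_nonneg a) h 2
  nlinarith [sq_nonneg (‖a - b‖ - ‖b‖)]

lemma second_moment_sub_mean_le {Z : Type*} [MeasurableSpace Z] (ν : Measure Z)
    [IsProbabilityMeasure ν] {d : ℕ} {g : Z → EuclideanSpace ℝ (Fin d)}
    (hg : Measurable g) (hsq : Integrable (fun w => ‖g w‖ ^ 2) ν) :
    ∫ w, ‖g w - ∫ w', g w' ∂ν‖ ^ 2 ∂ν ≤ ∫ w, ‖g w‖ ^ 2 ∂ν := by
  set c := ∫ w', g w' ∂ν with hc
  have hmem : MemLp g 2 ν := (memLp_two_iff_integrable_sq_norm hg.aestronglyMeasurable).2 hsq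
  have hint : Integrable g ν := hmem.integrable one_le_two
  have h1 : ∀ w, ‖g w - c‖ ^ 2 = ‖g w‖ ^ 2 - 2 * ⟪c, g w⟫_ℝ + ‖c‖ ^ 2 := by
    intro w
    rw [@norm_sub_sq_real _ _ _ (g w) c, real_inner_comm]
  calc ∫ w, ‖g w - c‖ ^ 2 ∂ν = ∫ w, (‖g w‖ ^ 2 - 2 * ⟪c, g w⟫_ℝ + ‖c‖ ^ 2) ∂ν := by
        simp_rw [h1]
    _ = (∫ w, ‖g w‖ ^ 2 ∂ν) - 2 * ⟪c, c⟫_ℝ + ‖c‖ ^ 2 := by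
        have i2 : Integrable (fun w => 2 * ⟪c, g w⟫_ℝ) ν := (hint.const_inner c).const_mul 2
        have i1 : Integrable (fun w => ‖g w‖ ^ 2 - 2 * ⟪c, g w⟫_ℝ) ν := hsq.sub i2
        rw [integral_add i1 (integrable_const _), integral_sub hsq i2, integral_const_mul,
          integral_inner hint, integral_const]
        simp
        rw [← hc, real_inner_self_eq_norm_sq]
    _ ≤ ∫ w, ‖g w‖ ^ 2 ∂ν := by
        rw [real_inner_self_eq_norm_sq]
        nlinarith [sq_nonneg ‖c‖]

/-- variance reduction for the averaged stochastic gradient. -/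
theorem minibatch_variance_reduction {d M : ℕ} (hM : 0 < M) (L : ℝ) (hL : 0 < L) {Z : Type*} [MeasurableSpace Z] {Ω : Type*} [MeasurableSpace Ω]
    (P : Measure Ω) [IsProbabilityMeasure P]
    (D : Fin M → Measure Z) (hD : ∀ m, IsProbabilityMeasure (D m))
    (F : EuclideanSpace ℝ (Fin d) → Z → ℝ) (dF : EuclideanSpace ℝ (Fin d) → Z → EuclideanSpace ℝ (Fin d))
    (f : EuclideanSpace ℝ (Fin d) → ℝ) (df : EuclideanSpace ℝ (Fin d) → EuclideanSpace ℝ (Fin d))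
    (hsmooth : ∀ m, ∀ᵐ z ∂(D m), SmoothSC L 0 (fun x => F x z) (fun x => dF x z))
    (hf : ∀ m x, f x = ∫ z, F x z ∂(D m))
    (hdf : ∀ m x, df x = ∫ z, dF x z ∂(D m))
    (hFjm : Measurable (fun p : EuclideanSpace ℝ (Fin d) × Z => F p.1 p.2))
    (hdFjm : Measurable (fun p : EuclideanSpace ℝ (Fin d) × Z => dF p.1 p.2))
    (hFint : ∀ m x, Integrable (fun z => F x z) (D m))
    (hdFsq : ∀ m x, Integrable (fun z => ‖dF x z‖ ^ 2) (D m))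
    (xstar : EuclideanSpace ℝ (Fin d)) (hmin : ∀ y, f xstar ≤ f y)
    (z : Fin M → Ω → Z) (hz : ∀ m, Measurable (z m))
    (hindep : iIndepFun z P)
    (hlaw : ∀ m, P.map (z m) = D m)
    (sopt2 : ℝ)
    (hsopt2 : sopt2 = (M : ℝ)⁻¹ * ∑ m, ∫ w, ‖dF xstar w‖ ^ 2 ∂(D m))
    (x : Fin M → EuclideanSpace ℝ (Fin d)) :
    (∫ ω, ‖(M : ℝ)⁻¹ • ∑ m, (dF (x m) (z m ω) - df (x m))‖ ^ 2 ∂P) ≤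
      2 * sopt2 / M + (4 * L / (M : ℝ) ^ 2) * ∑ m, Breg f df (x m) xstar := by
  classical
  have hMR : (0 : ℝ) < (M : ℝ) := by exact_mod_cast hM
  have hM0 : (M : ℝ) ≠ 0 := ne_of_gt hMR
  -- measurability
  have hmdF : ∀ v : EuclideanSpace ℝ (Fin d), Measurable fun w => dF v w :=
    fun v => hdFjm.comp measurable_prodMk_left
  have mem2 : ∀ (m : Fin M) (v : EuclideanSpace ℝ (Fin d)),
      MemLp (fun w => dF v w) 2 (D m) := fun m v =>
    (memLp_two_iff_integrable_sq_norm (hmdF v).aestronglyMeasurable).2 (hdFsq m v)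
  have int1 : ∀ (m : Fin M) (v : EuclideanSpace ℝ (Fin d)),
      Integrable (fun w => dF v w) (D m) := by
    intro m v
    haveI := hD m
    exact (mem2 m v).integrable one_le_two
  have memG : ∀ m : Fin M, MemLp (fun w => dF (x m) w - df (x m)) 2 (D m) := by
    intro m
    haveI := hD m
    exact (mem2 m (x m)).sub (memLp_const _)
  have hmG : ∀ m : Fin M, Measurable fun w => dF (x m) w - df (x m) :=
    fun m => (hmdF (x m)).sub measurable_const
  have hGsq_int : ∀ m : Fin M,
      Integrable (fun w => ‖dF (x m) w - df (x m)‖ ^ 2) (D m) := fun m =>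
    (memLp_two_iff_integrable_sq_norm (hmG m).aestronglyMeasurable).1 (memG m)
  -- transfer to Ω
  have hmapP : ∀ m : Fin M, ∫ ω, ‖dF (x m) (z m ω) - df (x m)‖ ^ 2 ∂P
      = ∫ w, ‖dF (x m) w - df (x m)‖ ^ 2 ∂(D m) := by
    intro m
    rw [← hlaw m]
    exact (integral_map (hz m).aemeasurable
      (((hmG m).norm.pow_const 2).aestronglyMeasurable)).symm
  have memY : ∀ m : Fin M, MemLp (fun ω => dF (x m) (z m ω) - df (x m)) 2 P := by
    intro m
    have h1 : MemLp (fun w => dF (x m) w - df (x m)) 2 (P.map (z m)) :=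
      (hlaw m).symm ▸ memG m
    exact h1.comp_of_map (hz m).aemeasurable
  have intY : ∀ m : Fin M, Integrable (fun ω => dF (x m) (z m ω) - df (x m)) P :=
    fun m => (memY m).integrable one_le_two
  have memq : ∀ (m : Fin M) (i : Fin d),
      MemLp (fun ω => (dF (x m) (z m ω) - df (x m)) i) 2 P := by
    intro m i
    exact (EuclideanSpace.proj (𝕜 := ℝ) i).comp_memLp' (memY m)
  have meanY : ∀ m : Fin M, ∫ ω, (dF (x m) (z m ω) - df (x m)) ∂P = 0 := by
    intro m
    have h2 : Integrable (fun ω => dF (x m) (z m ω)) P := by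
      have h3 : MemLp (fun w => dF (x m) w) 2 (P.map (z m)) := (hlaw m).symm ▸ mem2 m (x m)
      exact (h3.comp_of_map (hz m).aemeasurable).integrable one_le_two
    have h1 : ∫ ω, dF (x m) (z m ω) ∂P = df (x m) := by
      calc ∫ ω, dF (x m) (z m ω) ∂P = ∫ w, dF (x m) w ∂(P.map (z m)) :=
            (integral_map (hz m).aemeasurable (hmdF (x m)).aestronglyMeasurable).symm
        _ = ∫ w, dF (x m) w ∂(D m) := by rw [hlaw m]
        _ = df (x m) := (hdf m (x m)).symm
    rw [integral_sub h2 (integrable_const _), h1, integral_const]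
    simp
  have meanq : ∀ (m : Fin M) (i : Fin d),
      ∫ ω, (dF (x m) (z m ω) - df (x m)) i ∂P = 0 := by
    intro m i
    have h1 := (EuclideanSpace.proj (𝕜 := ℝ) i).integral_comp_comm (intY m)
    rw [meanY m] at h1
    simpa using h1
  -- independence per coordinate
  have hiind : ∀ i : Fin d, iIndepFun
      (fun m ω => (dF (x m) (z m ω) - df (x m)) i) P := by
    intro i
    have hφ : ∀ m : Fin M, Measurable fun w : Z => (dF (x m) w - df (x m)) i :=
      fun m => (EuclideanSpace.proj (𝕜 := ℝ) i).measurable.comp (hmG m)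
    exact hindep.comp _ hφ
  -- per coordinate
  have step_i : ∀ i : Fin d,
      ∫ ω, (∑ m, (dF (x m) (z m ω) - df (x m)) i) ^ 2 ∂P
        = ∑ m, ∫ ω, ((dF (x m) (z m ω) - df (x m)) i) ^ 2 ∂P := by
    intro i
    set q : Fin M → Ω → ℝ := fun m ω => (dF (x m) (z m ω) - df (x m)) i with hq
    have hpair : Set.Pairwise ↑(Finset.univ : Finset (Fin M))
        (fun a b => IndepFun (q a) (q b) P) :=
      fun a _ b _ hab => (hiind i).indepFun hab
    have hmemq : ∀ m ∈ Finset.univ, MemLp (q m) 2 P := fun m _ => memq m i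
    have hv := IndepFun.variance_sum (μ := P) hmemq hpair
    have hsum : MemLp (∑ m, q m) 2 P := memLp_finset_sum' _ hmemq
    have e3 : ∫ ω, (∑ m, q m) ω ∂P = 0 := by
      simp_rw [Finset.sum_apply]
      rw [integral_finset_sum _ (fun m _ => (memq m i).integrable one_le_two)]
      exact Finset.sum_eq_zero fun m _ => meanq m i
    calc ∫ ω, (∑ m, q m ω) ^ 2 ∂P = ∫ ω, ((∑ m, q m) ω) ^ 2 ∂P := by
          simp_rw [Finset.sum_apply]
      _ = ∑ m, variance (q m) P := by
          rw [← hv, variance_eq_sub hsum]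
          simp only [Pi.pow_apply]
          rw [show P[∑ m, q m] = ∫ ω, (∑ m, q m) ω ∂P from rfl, e3]
          ring
      _ = ∑ m, ∫ ω, q m ω ^ 2 ∂P := by
          refine Finset.sum_congr rfl fun m _ => ?_
          rw [variance_eq_sub (memq m i)]
          simp only [Pi.pow_apply]
          rw [show P[q m] = ∫ ω, q m ω ∂P from rfl, meanq m i]
          ring
  -- key identity
  have key : ∫ ω, ‖∑ m, (dF (x m) (z m ω) - df (x m))‖ ^ 2 ∂P
      = ∑ m, ∫ w, ‖dF (x m) w - df (x m)‖ ^ 2 ∂(D m) := by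
    have e0 : ∀ ω : Ω, ‖∑ m, (dF (x m) (z m ω) - df (x m))‖ ^ 2
        = ∑ i, (∑ m, (dF (x m) (z m ω) - df (x m)) i) ^ 2 := by
      intro ω
      rw [norm_sq_eq_sum]
      exact Finset.sum_congr rfl fun i _ => by rw [WithLp.ofLp_sum, Finset.sum_apply]
    have hint_i : ∀ i : Fin d,
        Integrable (fun ω => (∑ m, (dF (x m) (z m ω) - df (x m)) i) ^ 2) P := by
      intro i
      have hs : MemLp (fun ω => ∑ m, (dF (x m) (z m ω) - df (x m)) i) 2 P :=
        memLp_finset_sum _ (fun m _ => memq m i)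
      exact (memLp_two_iff_integrable_sq hs.aestronglyMeasurable).1 hs
    have hint_q : ∀ (m : Fin M) (i : Fin d),
        Integrable (fun ω => ((dF (x m) (z m ω) - df (x m)) i) ^ 2) P := fun m i =>
      (memLp_two_iff_integrable_sq (memq m i).aestronglyMeasurable).1 (memq m i)
    calc ∫ ω, ‖∑ m, (dF (x m) (z m ω) - df (x m))‖ ^ 2 ∂P
        = ∫ ω, ∑ i, (∑ m, (dF (x m) (z m ω) - df (x m)) i) ^ 2 ∂P := by
          simp_rw [e0]
      _ = ∑ i, ∫ ω, (∑ m, (dF (x m) (z m ω) - df (x m)) i) ^ 2 ∂P :=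
          integral_finset_sum _ (fun i _ => hint_i i)
      _ = ∑ i, ∑ m, ∫ ω, ((dF (x m) (z m ω) - df (x m)) i) ^ 2 ∂P := by
          exact Finset.sum_congr rfl fun i _ => step_i i
      _ = ∑ m : Fin M, ∑ i : Fin d, ∫ ω, ((dF (x m) (z m ω) - df (x m)) i) ^ 2 ∂P :=
          Finset.sum_comm
      _ = ∑ m : Fin M, ∫ ω, ‖dF (x m) (z m ω) - df (x m)‖ ^ 2 ∂P := by
          refine Finset.sum_congr rfl fun m _ => ?_
          rw [← integral_finset_sum _ (fun i _ => hint_q m i)]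
          simp_rw [← norm_sq_eq_sum]
      _ = ∑ m, ∫ w, ‖dF (x m) w - df (x m)‖ ^ 2 ∂(D m) :=
          Finset.sum_congr rfl fun m _ => hmapP m
  -- per-m bound on D m
  have bound_m : ∀ m : Fin M, ∫ w, ‖dF (x m) w - df (x m)‖ ^ 2 ∂(D m)
      ≤ 4 * L * Breg f df (x m) xstar + 2 * ∫ w, ‖dF xstar w‖ ^ 2 ∂(D m) := by
    intro m
    haveI := hD m
    have hA := second_moment_sub_mean_le (D m) (hmdF (x m)) (hdFsq m (x m))
    rw [← hdf m (x m)] at hA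
    have hdiff_mem : MemLp (fun w => dF (x m) w - dF xstar w) 2 (D m) :=
      (mem2 m (x m)).sub (mem2 m xstar)
    have hdiff_meas : Measurable fun w => dF (x m) w - dF xstar w :=
      (hmdF (x m)).sub (hmdF xstar)
    have hdiff_int : Integrable (fun w => ‖dF (x m) w - dF xstar w‖ ^ 2) (D m) :=
      (memLp_two_iff_integrable_sq_norm hdiff_meas.aestronglyMeasurable).1 hdiff_mem
    have hB : ∫ w, ‖dF (x m) w‖ ^ 2 ∂(D m)
        ≤ 2 * ∫ w, ‖dF (x m) w - dF xstar w‖ ^ 2 ∂(D m)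
          + 2 * ∫ w, ‖dF xstar w‖ ^ 2 ∂(D m) := by
      calc ∫ w, ‖dF (x m) w‖ ^ 2 ∂(D m)
          ≤ ∫ w, (2 * ‖dF (x m) w - dF xstar w‖ ^ 2 + 2 * ‖dF xstar w‖ ^ 2) ∂(D m) := by
            refine integral_mono (hdFsq m (x m))
              ((hdiff_int.const_mul 2).add ((hdFsq m xstar).const_mul 2)) ?_
            intro w
            exact sq_norm_le_two _ _
        _ = _ := by
            rw [integral_add (hdiff_int.const_mul 2) ((hdFsq m xstar).const_mul 2),
              integral_const_mul, integral_const_mul]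
    have hC : ∫ w, ‖dF (x m) w - dF xstar w‖ ^ 2 ∂(D m) ≤ 2 * L * Breg f df (x m) xstar := by
      have hae : ∀ᵐ w ∂(D m), ‖dF (x m) w - dF xstar w‖ ^ 2
          ≤ 2 * L * (F (x m) w - F xstar w - ⟪dF xstar w, x m - xstar⟫_ℝ) := by
        filter_upwards [hsmooth m] with w hw
        exact coco hL hw (x m) xstar
      have hinn_int : Integrable (fun w => ⟪dF xstar w, x m - xstar⟫_ℝ) (D m) :=
        (int1 m xstar).inner_const _
      have iFsub : Integrable (fun w => F (x m) w - F xstar w) (D m) :=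
        (hFint m (x m)).sub (hFint m xstar)
      have hRint : Integrable
          (fun w => 2 * L * (F (x m) w - F xstar w - ⟪dF xstar w, x m - xstar⟫_ℝ)) (D m) :=
        (iFsub.sub hinn_int).const_mul _
      calc ∫ w, ‖dF (x m) w - dF xstar w‖ ^ 2 ∂(D m)
          ≤ ∫ w, 2 * L * (F (x m) w - F xstar w - ⟪dF xstar w, x m - xstar⟫_ℝ) ∂(D m) :=
            integral_mono_ae hdiff_int hRint hae
        _ = 2 * L * Breg f df (x m) xstar := by
            rw [integral_const_mul,
              integral_sub iFsub hinn_int,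
              integral_sub (hFint m (x m)) (hFint m xstar)]
            have hin : ∫ w, ⟪dF xstar w, x m - xstar⟫_ℝ ∂(D m) = ⟪df xstar, x m - xstar⟫_ℝ := by
              have hcomm : (fun w => ⟪dF xstar w, x m - xstar⟫_ℝ)
                  = fun w => ⟪x m - xstar, dF xstar w⟫_ℝ :=
                funext fun w => real_inner_comm _ _
              rw [hcomm, integral_inner (int1 m xstar), ← hdf m xstar, real_inner_comm]
            rw [hin, ← hf m (x m), ← hf m xstar]
            rfl
    linarith
  -- final assembly
  have hfinal : (∫ ω, ‖(M : ℝ)⁻¹ • ∑ m, (dF (x m) (z m ω) - df (x m))‖ ^ 2 ∂P)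
      = ((M : ℝ)⁻¹) ^ 2 * ∫ ω, ‖∑ m, (dF (x m) (z m ω) - df (x m))‖ ^ 2 ∂P := by
    simp_rw [norm_smul, mul_pow, norm_inv, Real.norm_natCast]
    rw [integral_const_mul]
  rw [hfinal, key]
  calc ((M : ℝ)⁻¹) ^ 2 * ∑ m, ∫ w, ‖dF (x m) w - df (x m)‖ ^ 2 ∂(D m)
      ≤ ((M : ℝ)⁻¹) ^ 2 * ∑ m, (4 * L * Breg f df (x m) xstar
          + 2 * ∫ w, ‖dF xstar w‖ ^ 2 ∂(D m)) := by
        refine mul_le_mul_of_nonneg_left (Finset.sum_le_sum fun m _ => bound_m m) (by positivity)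
    _ = 2 * sopt2 / M + (4 * L / (M : ℝ) ^ 2) * ∑ m, Breg f df (x m) xstar := by
        rw [Finset.sum_add_distrib, hsopt2, ← Finset.mul_sum, ← Finset.mul_sum]
        field_simp
        ring
end

section
/- Let f : ℝ^d → ℝ be written as f(x) = E_{z∼D_m}[f(x,z)] for each m, with f(·,z) almost surely L-smooth and convex, and let x_* be a minimizer of f. Let x^1, ..., x^M ∈ ℝ^d, let g^m = ∇f(x^m, z_m) with z_1, ..., z_M independent, z_m ∼ D_m, and let g = (1/M) Σ_m g^m. Then (1/M) Σ_{m=1}^M E‖g^m - g‖² ≤ 2σ_opt² + (4L/M) Σ_{m=1}^M D_f(x^m, x_*), where σ_opt² = (1/M) Σ_m E_{z_m∼D_m}‖∇f(x_*, z_m)‖² and D_f(x,y) = f(x) - f(y) - ⟨∇f(y), x - y⟩. -/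
open MeasureTheory ProbabilityTheory Finset
open scoped InnerProductSpace

/-- Subtracting the average decreases the sum of squared norms. -/
lemma varB {M : ℕ} {E : Type*} [NormedAddCommGroup E] [InnerProductSpace ℝ E]
    (a : Fin M → E) :
    ∑ m, ‖a m - (M:ℝ)⁻¹ • ∑ j, a j‖ ^ 2 ≤ ∑ m, ‖a m‖ ^ 2 := by
  rcases Nat.eq_zero_or_pos M with h | hM
  · subst h; simp
  set c : E := (M:ℝ)⁻¹ • ∑ j, a j with hc
  have hsum : ∑ j, a j = (M:ℝ) • c := by
    rw [hc, smul_smul, mul_inv_cancel₀ (by exact_mod_cast hM.ne'), one_smul]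
  have hexp : ∀ m, ‖a m - c‖ ^ 2 = ‖a m‖ ^ 2 - 2 * ⟪a m, c⟫_ℝ + ‖c‖ ^ 2 := by
    intro m; rw [norm_sub_sq_real]
  calc ∑ m, ‖a m - c‖ ^ 2 = ∑ m, (‖a m‖ ^ 2 - 2 * ⟪a m, c⟫_ℝ + ‖c‖ ^ 2) := by
        simp_rw [hexp]
    _ = ∑ m, ‖a m‖ ^ 2 - 2 * ⟪∑ j, a j, c⟫_ℝ + (M:ℝ) * ‖c‖ ^ 2 := by
        rw [Finset.sum_add_distrib, Finset.sum_sub_distrib, ← Finset.mul_sum, ← sum_inner]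
        simp [mul_comm]
    _ = ∑ m, ‖a m‖ ^ 2 - (M:ℝ) * ‖c‖ ^ 2 := by
        rw [hsum, inner_smul_left, real_inner_self_eq_norm_sq]
        simp only [conj_trivial]; ring
    _ ≤ ∑ m, ‖a m‖ ^ 2 := by
        have : 0 ≤ (M:ℝ) * ‖c‖ ^ 2 := by positivity
        linarith

/-- Co-coercivity of the gradient of an `L`-smooth convex function, derived purely
from the two-sided Bregman inequalities. -/
lemma cocoercive_s13 {E : Type*} [NormedAddCommGroup E] [InnerProductSpace ℝ E]
    {L : ℝ} (hL : 0 < L) {h : E → ℝ} {dh : E → E}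
    (hs : ∀ x y : E, 0 ≤ h x - h y - ⟪dh y, x - y⟫_ℝ ∧
      h x - h y - ⟪dh y, x - y⟫_ℝ ≤ L / 2 * ‖x - y‖ ^ 2) (x y : E) :
    ‖dh x - dh y‖ ^ 2 ≤ 2 * L * (h x - h y - ⟪dh y, x - y⟫_ℝ) := by
  set v : E := dh x - dh y with hv
  set w : E := x - L⁻¹ • v with hw
  have h1 := (hs w y).1
  have h2 := (hs w x).2
  have hwx : w - x = -(L⁻¹ • v) := by rw [hw]; abel
  have hnorm : ‖w - x‖ ^ 2 = L⁻¹ ^ 2 * ‖v‖ ^ 2 := by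
    rw [hwx, norm_neg, norm_smul, mul_pow]; simp [abs_of_pos (inv_pos.mpr hL)]
  have hinx : ⟪dh x, w - x⟫_ℝ = -(L⁻¹ * ⟪dh x, v⟫_ℝ) := by
    rw [hwx, inner_neg_right, inner_smul_right]
  have hwy : w - y = (x - y) - L⁻¹ • v := by rw [hw]; abel
  have hiny : ⟪dh y, w - y⟫_ℝ = ⟪dh y, x - y⟫_ℝ - L⁻¹ * ⟪dh y, v⟫_ℝ := by
    rw [hwy, inner_sub_right, inner_smul_right]
  have hvv : ⟪dh x, v⟫_ℝ - ⟪dh y, v⟫_ℝ = ‖v‖ ^ 2 := by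
    rw [← inner_sub_left, ← hv, real_inner_self_eq_norm_sq]
  rw [hnorm] at h2
  rw [hiny] at h1
  rw [hinx] at h2
  have hvv' : L⁻¹ * ⟪dh x, v⟫_ℝ - L⁻¹ * ⟪dh y, v⟫_ℝ = L⁻¹ * ‖v‖ ^ 2 := by
    rw [← mul_sub, hvv]
  have hsq : L / 2 * (L⁻¹ ^ 2 * ‖v‖ ^ 2) = L⁻¹ * ‖v‖ ^ 2 / 2 := by
    field_simp
  have key : L⁻¹ * ‖v‖ ^ 2 / 2 ≤ h x - h y - ⟪dh y, x - y⟫_ℝ := by linarith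
  have h3 := mul_le_mul_of_nonneg_left key hL.le
  have h4 : L * (L⁻¹ * ‖v‖ ^ 2 / 2) = ‖v‖ ^ 2 / 2 := by field_simp
  linarith

/-- The squared norm of an average is at most the sum of the squared norms. -/
lemma norm_avg_sq_le {M : ℕ} {E : Type*} [NormedAddCommGroup E] [NormedSpace ℝ E] (a : Fin M → E) :
    ‖(M:ℝ)⁻¹ • ∑ j, a j‖ ^ 2 ≤ ∑ j, ‖a j‖ ^ 2 := by
  rcases Nat.eq_zero_or_pos M with h | hM
  · subst h; simp
  have hM1 : (1:ℝ) ≤ (M:ℝ) := by exact_mod_cast hM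
  have hMpos : (0:ℝ) < (M:ℝ) := by linarith
  have h1 : ‖(M:ℝ)⁻¹ • ∑ j, a j‖ = (M:ℝ)⁻¹ * ‖∑ j, a j‖ := by
    rw [norm_smul]; simp [abs_of_nonneg (inv_nonneg.mpr hMpos.le)]
  have h2 : ‖∑ j, a j‖ ≤ ∑ j, ‖a j‖ := norm_sum_le _ _
  have h3 : (∑ j, ‖a j‖) ^ 2 ≤ (M:ℝ) * ∑ j, ‖a j‖ ^ 2 := by
    have := sq_sum_le_card_mul_sum_sq (s := (univ : Finset (Fin M))) (f := fun j => ‖a j‖)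
    simpa using this
  have h4 : ‖∑ j, a j‖ ^ 2 ≤ (∑ j, ‖a j‖) ^ 2 := by
    apply pow_le_pow_left₀ (norm_nonneg _) h2
  calc ‖(M:ℝ)⁻¹ • ∑ j, a j‖ ^ 2 = (M:ℝ)⁻¹ ^ 2 * ‖∑ j, a j‖ ^ 2 := by rw [h1]; ring
    _ ≤ (M:ℝ)⁻¹ ^ 2 * ((M:ℝ) * ∑ j, ‖a j‖ ^ 2) := by
        apply mul_le_mul_of_nonneg_left (h4.trans h3) (by positivity)
    _ = (M:ℝ)⁻¹ * ∑ j, ‖a j‖ ^ 2 := by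
        field_simp
    _ ≤ ∑ j, ‖a j‖ ^ 2 := by
        have hnn : 0 ≤ ∑ j, ‖a j‖ ^ 2 := by positivity
        have hMi : (M:ℝ)⁻¹ ≤ 1 := by
          rw [inv_le_one_iff₀]; right; exact hM1
        nlinarith

/-- One-distribution bound: second moment of the stochastic gradient at `xm` in terms of
the second moment at `xstar` plus the Bregman divergence. -/
lemma step3 {d : ℕ} {Z : Type*} [MeasurableSpace Z] (L : ℝ) (hL : 0 < L)
    (D : Measure Z) [IsProbabilityMeasure D]
    (F : EuclideanSpace ℝ (Fin d) → Z → ℝ)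
    (dF : EuclideanSpace ℝ (Fin d) → Z → EuclideanSpace ℝ (Fin d))
    (hsmooth : ∀ᵐ w ∂D, SmoothSC L 0 (fun v => F v w) (fun v => dF v w))
    (hmeas : ∀ v, Measurable (fun w => dF v w))
    (hFint : ∀ v, Integrable (fun w => F v w) D)
    (hdFsq : ∀ v, Integrable (fun w => ‖dF v w‖ ^ 2) D)
    (xm xstar : EuclideanSpace ℝ (Fin d)) :
    ∫ w, ‖dF xm w‖ ^ 2 ∂D ≤ 2 * ∫ w, ‖dF xstar w‖ ^ 2 ∂D +
      4 * L * ((∫ w, F xm w ∂D) - (∫ w, F xstar w ∂D) - ⟪∫ w, dF xstar w ∂D, xm - xstar⟫_ℝ) := by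
  set c := xm - xstar with hc
  have hdFstar_int : Integrable (fun w => dF xstar w) D := by
    refine Integrable.mono' ((integrable_const (1:ℝ)).add (hdFsq xstar))
      (hmeas xstar).aestronglyMeasurable ?_
    filter_upwards with w
    simp only [Pi.add_apply]
    nlinarith [sq_nonneg (‖dF xstar w‖ - 1), norm_nonneg (dF xstar w)]
  have hinner_int : Integrable (fun w => ⟪dF xstar w, c⟫_ℝ) D := by
    refine Integrable.mono' (((integrable_const (1:ℝ)).add (hdFsq xstar)).mul_const ‖c‖)
      ((hmeas xstar).inner measurable_const).aestronglyMeasurable ?_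
    filter_upwards with w
    have h1 : |⟪dF xstar w, c⟫_ℝ| ≤ ‖dF xstar w‖ * ‖c‖ := abs_real_inner_le_norm _ _
    have h2 : ‖dF xstar w‖ ≤ 1 + ‖dF xstar w‖ ^ 2 := by
      nlinarith [sq_nonneg (‖dF xstar w‖ - 1)]
    calc ‖⟪dF xstar w, c⟫_ℝ‖ = |⟪dF xstar w, c⟫_ℝ| := rfl
      _ ≤ ‖dF xstar w‖ * ‖c‖ := h1
      _ ≤ (1 + ‖dF xstar w‖ ^ 2) * ‖c‖ := by
          exact mul_le_mul_of_nonneg_right h2 (norm_nonneg _)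
  have hsub : Integrable (fun w => F xm w - F xstar w) D := (hFint xm).sub (hFint xstar)
  have hBint : Integrable (fun w => F xm w - F xstar w - ⟪dF xstar w, c⟫_ℝ) D :=
    hsub.sub hinner_int
  have hGint : Integrable (fun w => 4 * L * (F xm w - F xstar w - ⟪dF xstar w, c⟫_ℝ)
      + 2 * ‖dF xstar w‖ ^ 2) D := by
    exact (hBint.const_mul _).add ((hdFsq xstar).const_mul 2)
  have hmono : ∫ w, ‖dF xm w‖ ^ 2 ∂D ≤
      ∫ w, (4 * L * (F xm w - F xstar w - ⟪dF xstar w, c⟫_ℝ) + 2 * ‖dF xstar w‖ ^ 2) ∂D := by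
    refine integral_mono_of_nonneg ?_ hGint ?_
    · filter_upwards with w; positivity
    · filter_upwards [hsmooth] with w hs
      have hs' : ∀ a b : EuclideanSpace ℝ (Fin d),
          0 ≤ F a w - F b w - ⟪dF b w, a - b⟫_ℝ ∧
          F a w - F b w - ⟪dF b w, a - b⟫_ℝ ≤ L / 2 * ‖a - b‖ ^ 2 := by
        intro a b
        refine ⟨?_, (hs a b).2⟩
        have := (hs a b).1; simpa using this
      have hco := cocoercive_s13 hL (h := fun v => F v w) (dh := fun v => dF v w) hs' xm xstar
      have htri : ‖dF xm w‖ ^ 2 ≤ 2 * ‖dF xm w - dF xstar w‖ ^ 2 + 2 * ‖dF xstar w‖ ^ 2 := by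
        have h1 : ‖dF xm w‖ ≤ ‖dF xm w - dF xstar w‖ + ‖dF xstar w‖ := by
          simpa using norm_sub_le_norm_sub_add_norm_sub (dF xm w) (dF xstar w) 0
        have h2 : ‖dF xm w‖ ^ 2 ≤ (‖dF xm w - dF xstar w‖ + ‖dF xstar w‖) ^ 2 :=
          pow_le_pow_left₀ (norm_nonneg _) h1 2
        nlinarith [sq_nonneg (‖dF xm w - dF xstar w‖ - ‖dF xstar w‖)]
      nlinarith [hco]
  have heq : ∫ w, (4 * L * (F xm w - F xstar w - ⟪dF xstar w, c⟫_ℝ) + 2 * ‖dF xstar w‖ ^ 2) ∂D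
      = 4 * L * ((∫ w, F xm w ∂D) - (∫ w, F xstar w ∂D) - ⟪∫ w, dF xstar w ∂D, c⟫_ℝ)
        + 2 * ∫ w, ‖dF xstar w‖ ^ 2 ∂D := by
    rw [integral_add (hBint.const_mul _) ((hdFsq xstar).const_mul 2),
      integral_const_mul, integral_const_mul,
      integral_sub hsub hinner_int,
      integral_sub (hFint xm) (hFint xstar)]
    congr 2
    have : ∀ w, ⟪dF xstar w, c⟫_ℝ = ⟪c, dF xstar w⟫_ℝ := fun w => real_inner_comm _ _
    simp_rw [this, integral_inner hdFstar_int, real_inner_comm]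
  linarith [hmono, heq.le, heq.ge]

/-- deviation of the stochastic gradients from their average. -/
theorem average_gradient_deviation {d M : ℕ} (hM : 0 < M) (L : ℝ) (hL : 0 < L) {Z : Type*} [MeasurableSpace Z] {Ω : Type*} [MeasurableSpace Ω]
    (P : Measure Ω) [IsProbabilityMeasure P]
    (D : Fin M → Measure Z) (hD : ∀ m, IsProbabilityMeasure (D m))
    (F : EuclideanSpace ℝ (Fin d) → Z → ℝ) (dF : EuclideanSpace ℝ (Fin d) → Z → EuclideanSpace ℝ (Fin d))
    (f : EuclideanSpace ℝ (Fin d) → ℝ) (df : EuclideanSpace ℝ (Fin d) → EuclideanSpace ℝ (Fin d))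
    (hsmooth : ∀ m, ∀ᵐ z ∂(D m), SmoothSC L 0 (fun x => F x z) (fun x => dF x z))
    (hf : ∀ m x, f x = ∫ z, F x z ∂(D m))
    (hdf : ∀ m x, df x = ∫ z, dF x z ∂(D m))
    (hFjm : Measurable (fun p : EuclideanSpace ℝ (Fin d) × Z => F p.1 p.2))
    (hdFjm : Measurable (fun p : EuclideanSpace ℝ (Fin d) × Z => dF p.1 p.2))
    (hFint : ∀ m x, Integrable (fun z => F x z) (D m))
    (hdFsq : ∀ m x, Integrable (fun z => ‖dF x z‖ ^ 2) (D m))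
    (xstar : EuclideanSpace ℝ (Fin d)) (hmin : ∀ y, f xstar ≤ f y)
    (z : Fin M → Ω → Z) (hz : ∀ m, Measurable (z m))
    (hindep : iIndepFun z P)
    (hlaw : ∀ m, P.map (z m) = D m)
    (sopt2 : ℝ)
    (hsopt2 : sopt2 = (M : ℝ)⁻¹ * ∑ m, ∫ w, ‖dF xstar w‖ ^ 2 ∂(D m))
    (x : Fin M → EuclideanSpace ℝ (Fin d)) :
    (M : ℝ)⁻¹ * ∑ m, (∫ ω, ‖dF (x m) (z m ω) - (M : ℝ)⁻¹ • ∑ j, dF (x j) (z j ω)‖ ^ 2 ∂P) ≤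
      2 * sopt2 + (4 * L / M) * ∑ m, Breg f df (x m) xstar := by
  haveI : ∀ m, IsProbabilityMeasure (D m) := hD
  have hmeasdF : ∀ v : EuclideanSpace ℝ (Fin d), Measurable (fun w : Z => dF v w) :=
    fun v => hdFjm.comp (measurable_const.prodMk measurable_id)
  have hGmeas : ∀ j : Fin M, Measurable (fun ω => dF (x j) (z j ω)) :=
    fun j => (hmeasdF (x j)).comp (hz j)
  -- integrability of squared norms of the stochastic gradients over P
  have hGsq_int : ∀ m, Integrable (fun ω => ‖dF (x m) (z m ω)‖ ^ 2) P := by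
    intro m
    have h1 : Integrable (fun w : Z => ‖dF (x m) w‖ ^ 2) (P.map (z m)) := by
      rw [hlaw m]; exact hdFsq m (x m)
    exact (integrable_map_measure ((hmeasdF (x m)).norm.pow_const 2).aestronglyMeasurable
      (hz m).aemeasurable).mp h1
  have htrans : ∀ m, ∫ ω, ‖dF (x m) (z m ω)‖ ^ 2 ∂P = ∫ w, ‖dF (x m) w‖ ^ 2 ∂(D m) := by
    intro m
    rw [← hlaw m]
    exact (integral_map (hz m).aemeasurable
      ((hmeasdF (x m)).norm.pow_const 2).aestronglyMeasurable).symm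
  have hsum_int : Integrable (fun ω => ∑ j, ‖dF (x j) (z j ω)‖ ^ 2) P :=
    integrable_finset_sum _ (fun j _ => hGsq_int j)
  -- integrability of each deviation term
  have hcmeas : Measurable (fun ω => (M:ℝ)⁻¹ • ∑ j, dF (x j) (z j ω)) :=
    (Finset.measurable_sum univ (fun j _ => hGmeas j)).const_smul ((M:ℝ)⁻¹)
  have hterm_int : ∀ m, Integrable
      (fun ω => ‖dF (x m) (z m ω) - (M:ℝ)⁻¹ • ∑ j, dF (x j) (z j ω)‖ ^ 2) P := by
    intro m
    refine Integrable.mono' (((hGsq_int m).const_mul 2).add (hsum_int.const_mul 2))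
      (((hGmeas m).sub hcmeas).norm.pow_const 2).aestronglyMeasurable ?_
    filter_upwards with ω
    have hcb : ‖(M:ℝ)⁻¹ • ∑ j, dF (x j) (z j ω)‖ ^ 2 ≤ ∑ j, ‖dF (x j) (z j ω)‖ ^ 2 :=
      norm_avg_sq_le (fun j => dF (x j) (z j ω))
    have h1 : ‖dF (x m) (z m ω) - (M:ℝ)⁻¹ • ∑ j, dF (x j) (z j ω)‖ ≤
        ‖dF (x m) (z m ω)‖ + ‖(M:ℝ)⁻¹ • ∑ j, dF (x j) (z j ω)‖ := norm_sub_le _ _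
    have h2 := pow_le_pow_left₀ (norm_nonneg _) h1 2
    have h3 : ‖(‖dF (x m) (z m ω) - (M:ℝ)⁻¹ • ∑ j, dF (x j) (z j ω)‖ ^ 2 : ℝ)‖ =
        ‖dF (x m) (z m ω) - (M:ℝ)⁻¹ • ∑ j, dF (x j) (z j ω)‖ ^ 2 := by
      rw [Real.norm_eq_abs, abs_of_nonneg (by positivity)]
    rw [h3]
    simp only [Pi.add_apply]
    nlinarith [sq_nonneg (‖dF (x m) (z m ω)‖ - ‖(M:ℝ)⁻¹ • ∑ j, dF (x j) (z j ω)‖)]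
  -- main chain
  have key1 : ∑ m, ∫ ω, ‖dF (x m) (z m ω) - (M:ℝ)⁻¹ • ∑ j, dF (x j) (z j ω)‖ ^ 2 ∂P ≤
      ∑ m, ∫ w, ‖dF (x m) w‖ ^ 2 ∂(D m) := by
    calc ∑ m, ∫ ω, ‖dF (x m) (z m ω) - (M:ℝ)⁻¹ • ∑ j, dF (x j) (z j ω)‖ ^ 2 ∂P
        = ∫ ω, ∑ m, ‖dF (x m) (z m ω) - (M:ℝ)⁻¹ • ∑ j, dF (x j) (z j ω)‖ ^ 2 ∂P :=
          (integral_finset_sum _ (fun m _ => hterm_int m)).symm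
      _ ≤ ∫ ω, ∑ m, ‖dF (x m) (z m ω)‖ ^ 2 ∂P := by
          refine integral_mono (integrable_finset_sum _ (fun m _ => hterm_int m)) hsum_int ?_
          intro ω
          exact varB (fun j => dF (x j) (z j ω))
      _ = ∑ m, ∫ ω, ‖dF (x m) (z m ω)‖ ^ 2 ∂P := integral_finset_sum _ (fun m _ => hGsq_int m)
      _ = ∑ m, ∫ w, ‖dF (x m) w‖ ^ 2 ∂(D m) := Finset.sum_congr rfl (fun m _ => htrans m)
  have key2 : ∀ m, ∫ w, ‖dF (x m) w‖ ^ 2 ∂(D m) ≤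
      2 * (∫ w, ‖dF xstar w‖ ^ 2 ∂(D m)) + 4 * L * Breg f df (x m) xstar := by
    intro m
    have h := step3 L hL (D m) F dF (hsmooth m) hmeasdF (hFint m) (hdFsq m) (x m) xstar
    rw [← hf m (x m), ← hf m xstar, ← hdf m xstar] at h
    simpa [Breg] using h
  have key3 : ∑ m, ∫ ω, ‖dF (x m) (z m ω) - (M:ℝ)⁻¹ • ∑ j, dF (x j) (z j ω)‖ ^ 2 ∂P ≤
      ∑ m, (2 * (∫ w, ‖dF xstar w‖ ^ 2 ∂(D m)) + 4 * L * Breg f df (x m) xstar) :=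
    key1.trans (Finset.sum_le_sum (fun m _ => key2 m))
  have hMnn : (0:ℝ) ≤ (M:ℝ)⁻¹ := by positivity
  calc (M : ℝ)⁻¹ * ∑ m, (∫ ω, ‖dF (x m) (z m ω) - (M : ℝ)⁻¹ • ∑ j, dF (x j) (z j ω)‖ ^ 2 ∂P)
      ≤ (M : ℝ)⁻¹ * ∑ m, (2 * (∫ w, ‖dF xstar w‖ ^ 2 ∂(D m)) + 4 * L * Breg f df (x m) xstar) :=
        mul_le_mul_of_nonneg_left key3 hMnn
    _ = 2 * sopt2 + (4 * L / M) * ∑ m, Breg f df (x m) xstar := by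
        rw [hsopt2, Finset.sum_add_distrib, ← Finset.mul_sum, ← Finset.mul_sum]
        ring
end

section
/- Let f : ℝ^d → ℝ be written as f(x) = E_{z∼D_m}[f(x,z)] for each m, with f(·,z) almost surely L-smooth and μ-strongly convex (μ ≥ 0), and let x_* be a minimizer of f. Let x^1, ..., x^M ∈ ℝ^d with average x̂ and V = (1/M) Σ_m ‖x^m - x̂‖², let g^m = ∇f(x^m, z_m) with z_1, ..., z_M independent, z_m ∼ D_m, and set y^m = x^m - γ g^m with average ŷ and V' = (1/M) Σ_m ‖y^m - ŷ‖². If 0 < γ ≤ 1/(2L), then E[V'] ≤ (1 - γμ)V + 2γ(f(x̂) - f(x_*)) + 2γ²σ_opt², where σ_opt² = (1/M) Σ_m E_{z_m∼D_m}‖∇f(x_*, z_m)‖². -/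
open MeasureTheory ProbabilityTheory Finset
open scoped InnerProductSpace

lemma aux_var_le {E : Type*} [NormedAddCommGroup E] [InnerProductSpace ℝ E]
    {M : ℕ} (hM : 0 < M) (y : Fin M → E) (a : E) :
    ∑ m, ‖y m - (M:ℝ)⁻¹ • ∑ j, y j‖ ^ 2 ≤ ∑ m, ‖y m - a‖ ^ 2 := by
  set c : E := (M:ℝ)⁻¹ • ∑ j, y j with hc
  have hMne : (M:ℝ) ≠ 0 := Nat.cast_ne_zero.2 hM.ne'
  have hsum : ∑ m : Fin M, (y m - c) = 0 := by
    rw [Finset.sum_sub_distrib, Finset.sum_const, card_univ, Fintype.card_fin,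
      ← Nat.cast_smul_eq_nsmul ℝ, hc, smul_smul, mul_inv_cancel₀ hMne, one_smul, sub_self]
  have expand : ∀ m : Fin M, ‖y m - a‖ ^ 2
      = ‖y m - c‖ ^ 2 + 2 * ⟪y m - c, c - a⟫_ℝ + ‖c - a‖ ^ 2 := by
    intro m
    have h : y m - a = (y m - c) + (c - a) := by abel
    rw [h, norm_add_sq_real]
  calc ∑ m, ‖y m - c‖ ^ 2
      ≤ ∑ m, ‖y m - c‖ ^ 2 + (M : ℝ) * ‖c - a‖ ^ 2 := by
        have : 0 ≤ (M : ℝ) * ‖c - a‖ ^ 2 := by positivity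
        linarith
    _ = ∑ m, ‖y m - a‖ ^ 2 := by
        rw [Finset.sum_congr rfl (fun m _ => expand m), Finset.sum_add_distrib,
          Finset.sum_add_distrib]
        have : ∑ m : Fin M, 2 * ⟪y m - c, c - a⟫_ℝ = 0 := by
          rw [← Finset.mul_sum, ← sum_inner, hsum, inner_zero_left, mul_zero]
        rw [this, Finset.sum_const, card_univ, Fintype.card_fin, nsmul_eq_mul]
        ring

lemma aux_sum_split {M : ℕ} (a S : Fin M → ℝ) (p q r : ℝ) :
    ∑ m, (p * a m + q + r * S m) = p * ∑ m, a m + M * q + r * ∑ m, S m := by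
  rw [Finset.sum_add_distrib, Finset.sum_add_distrib, ← Finset.mul_sum, ← Finset.mul_sum,
    Finset.sum_const, card_univ, Fintype.card_fin, nsmul_eq_mul]

lemma aux_coco {d : ℕ} {L μ : ℝ} (hL : 0 < L) {h : EuclideanSpace ℝ (Fin d) → ℝ}
    {dh : EuclideanSpace ℝ (Fin d) → EuclideanSpace ℝ (Fin d)}
    (hs : SmoothSC L μ h dh) (hμ : 0 ≤ μ) (x y : EuclideanSpace ℝ (Fin d)) :
    ‖dh x - dh y‖ ^ 2 ≤ 2 * L * (h x - h y - ⟪dh y, x - y⟫_ℝ) := by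
  set g := dh x - dh y with hg
  set u := x - L⁻¹ • g with hu
  have h1 := (hs u x).2
  have h2 := (hs u y).1
  have hux : u - x = -(L⁻¹ • g) := by rw [hu]; abel
  have hi1 : ⟪dh x, u - x⟫_ℝ = -(L⁻¹ * ⟪dh x, g⟫_ℝ) := by
    rw [hux, inner_neg_right, real_inner_smul_right]
  have hn1 : ‖u - x‖ ^ 2 = L⁻¹ ^ 2 * ‖g‖ ^ 2 := by
    rw [hux, norm_neg, norm_smul, mul_pow, Real.norm_eq_abs, sq_abs]
  have huy : u - y = (x - y) - L⁻¹ • g := by rw [hu]; abel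
  have hi2 : ⟪dh y, u - y⟫_ℝ = ⟪dh y, x - y⟫_ℝ - L⁻¹ * ⟪dh y, g⟫_ℝ := by
    rw [huy, inner_sub_right, real_inner_smul_right]
  have hgg : ⟪dh x, g⟫_ℝ - ⟪dh y, g⟫_ℝ = ‖g‖ ^ 2 := by
    rw [← inner_sub_left, ← hg, real_inner_self_eq_norm_sq]
  have hnn : 0 ≤ μ / 2 * ‖u - y‖ ^ 2 := by positivity
  have hLinv : L * L⁻¹ = 1 := mul_inv_cancel₀ hL.ne'
  rw [hi1, hn1] at h1
  rw [hi2] at h2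
  have hLL : L / 2 * (L⁻¹ ^ 2 * ‖g‖ ^ 2) = L⁻¹ / 2 * ‖g‖ ^ 2 := by
    field_simp
  rw [hLL] at h1
  have hgg' : L⁻¹ * ⟪dh x, g⟫_ℝ - L⁻¹ * ⟪dh y, g⟫_ℝ = L⁻¹ * ‖g‖ ^ 2 := by
    rw [← mul_sub, hgg]
  have hkey : L⁻¹ / 2 * ‖g‖ ^ 2 ≤ h x - h y - ⟪dh y, x - y⟫_ℝ := by linarith
  have hid : ‖g‖ ^ 2 = 2 * L * (L⁻¹ / 2 * ‖g‖ ^ 2) := by field_simp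
  rw [hid]
  exact mul_le_mul_of_nonneg_left hkey (by positivity)

set_option maxHeartbeats 2000000 in
/-- one-step recursion for the iterate deviation. -/
theorem iterate_deviation_recursion {d M : ℕ} (hM : 0 < M) (L : ℝ) (hL : 0 < L) (μ : ℝ) (hμ : 0 ≤ μ)
    {Z : Type*} [MeasurableSpace Z] {Ω : Type*} [MeasurableSpace Ω]
    (P : Measure Ω) [IsProbabilityMeasure P]
    (D : Fin M → Measure Z) (hD : ∀ m, IsProbabilityMeasure (D m))
    (F : EuclideanSpace ℝ (Fin d) → Z → ℝ) (dF : EuclideanSpace ℝ (Fin d) → Z → EuclideanSpace ℝ (Fin d))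
    (f : EuclideanSpace ℝ (Fin d) → ℝ) (df : EuclideanSpace ℝ (Fin d) → EuclideanSpace ℝ (Fin d))
    (hsmooth : ∀ m, ∀ᵐ z ∂(D m), SmoothSC L μ (fun x => F x z) (fun x => dF x z))
    (hf : ∀ m x, f x = ∫ z, F x z ∂(D m))
    (hdf : ∀ m x, df x = ∫ z, dF x z ∂(D m))
    (hFjm : Measurable (fun p : EuclideanSpace ℝ (Fin d) × Z => F p.1 p.2))
    (hdFjm : Measurable (fun p : EuclideanSpace ℝ (Fin d) × Z => dF p.1 p.2))
    (hFint : ∀ m x, Integrable (fun z => F x z) (D m))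
    (hdFsq : ∀ m x, Integrable (fun z => ‖dF x z‖ ^ 2) (D m))
    (xstar : EuclideanSpace ℝ (Fin d)) (hmin : ∀ y, f xstar ≤ f y)
    (z : Fin M → Ω → Z) (hz : ∀ m, Measurable (z m))
    (hindep : iIndepFun z P)
    (hlaw : ∀ m, P.map (z m) = D m)
    (sopt2 : ℝ)
    (hsopt2 : sopt2 = (M : ℝ)⁻¹ * ∑ m, ∫ w, ‖dF xstar w‖ ^ 2 ∂(D m))
    (x : Fin M → EuclideanSpace ℝ (Fin d))
    (xhat : EuclideanSpace ℝ (Fin d)) (hxhat : xhat = (M : ℝ)⁻¹ • ∑ m, x m)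
    (Vdev : ℝ) (hV : Vdev = (M : ℝ)⁻¹ * ∑ m, ‖x m - xhat‖ ^ 2)
    (γ : ℝ) (hγ0 : 0 < γ) (hγ : γ ≤ 1 / (2 * L)) :
    (∫ ω, (M : ℝ)⁻¹ * ∑ m, ‖(x m - γ • dF (x m) (z m ω)) -
        (M : ℝ)⁻¹ • ∑ j, (x j - γ • dF (x j) (z j ω))‖ ^ 2 ∂P) ≤
      (1 - γ * μ) * Vdev + 2 * γ * (f xhat - f xstar) + 2 * γ ^ 2 * sopt2 := by
  classical
  have hMne : (M : ℝ) ≠ 0 := Nat.cast_ne_zero.2 hM.ne'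
  have m₀ : Fin M := ⟨0, hM⟩
  haveI hDP : ∀ m, IsProbabilityMeasure (D m) := hD
  -- basic measurability
  have hdFmeas : ∀ v : EuclideanSpace ℝ (Fin d), Measurable (fun w : Z => dF v w) :=
    fun v => hdFjm.comp measurable_prodMk_left
  have hFmeas : ∀ v : EuclideanSpace ℝ (Fin d), Measurable (fun w : Z => F v w) :=
    fun v => hFjm.comp measurable_prodMk_left
  -- integrability of the gradient map
  have hdFint : ∀ m (v : EuclideanSpace ℝ (Fin d)), Integrable (fun w => dF v w) (D m) := by
    intro m v
    refine Integrable.mono' ((integrable_const (1:ℝ)).add (hdFsq m v))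
      (hdFmeas v).aestronglyMeasurable ?_
    filter_upwards with w
    simp only [Pi.add_apply]
    nlinarith [sq_nonneg (‖dF v w‖ - 1), norm_nonneg (dF v w)]
  have hinner_int : ∀ m (v c : EuclideanSpace ℝ (Fin d)),
      Integrable (fun w => ⟪dF v w, c⟫_ℝ) (D m) := by
    intro m v c
    refine Integrable.mono' ((hdFint m v).norm.const_mul ‖c‖)
      ?_ ?_
    · exact ((hdFmeas v).inner measurable_const).aestronglyMeasurable
    · filter_upwards with w
      rw [Real.norm_eq_abs]
      calc |⟪dF v w, c⟫_ℝ| ≤ ‖dF v w‖ * ‖c‖ := abs_real_inner_le_norm _ _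
        _ = ‖c‖ * ‖dF v w‖ := by ring
  have hinner_eq : ∀ m (v c : EuclideanSpace ℝ (Fin d)),
      ∫ w, ⟪dF v w, c⟫_ℝ ∂(D m) = ⟪df v, c⟫_ℝ := by
    intro m v c
    have : ∫ w, ⟪dF v w, c⟫_ℝ ∂(D m) = ∫ w, ⟪c, dF v w⟫_ℝ ∂(D m) := by
      simp_rw [real_inner_comm]
    rw [this, integral_inner (hdFint m v), hdf m v, real_inner_comm]
  -- Bregman integral identity
  have hBregInt : ∀ m (a b : EuclideanSpace ℝ (Fin d)),
      Integrable (fun w => F a w - F b w - ⟪dF b w, a - b⟫_ℝ) (D m) :=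
    fun m a b => ((hFint m a).sub (hFint m b)).sub (hinner_int m b (a - b))
  have hBregEq : ∀ m (a b : EuclideanSpace ℝ (Fin d)),
      ∫ w, (F a w - F b w - ⟪dF b w, a - b⟫_ℝ) ∂(D m)
        = f a - f b - ⟪df b, a - b⟫_ℝ := by
    intro m a b
    have hab : Integrable (fun w => F a w - F b w) (D m) := (hFint m a).sub (hFint m b)
    rw [integral_sub hab (hinner_int m b (a - b)),
      integral_sub (hFint m a) (hFint m b), hinner_eq m b (a - b), ← hf m a, ← hf m b]
  -- f itself is smooth and strongly convex
  have hfs : SmoothSC L μ f df := by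
    intro a b
    constructor
    · have hae : ∀ᵐ w ∂(D m₀), μ / 2 * ‖a - b‖ ^ 2
          ≤ F a w - F b w - ⟪dF b w, a - b⟫_ℝ := by
        filter_upwards [hsmooth m₀] with w hw using (hw a b).1
      have := integral_mono_ae (integrable_const _) (hBregInt m₀ a b) hae
      rwa [integral_const, probReal_univ, one_smul, hBregEq m₀ a b] at this
    · have hae : ∀ᵐ w ∂(D m₀), F a w - F b w - ⟪dF b w, a - b⟫_ℝ
          ≤ L / 2 * ‖a - b‖ ^ 2 := by
        filter_upwards [hsmooth m₀] with w hw using (hw a b).2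
      have := integral_mono_ae (hBregInt m₀ a b) (integrable_const _) hae
      rwa [integral_const, probReal_univ, one_smul, hBregEq m₀ a b] at this
  -- the gradient of f vanishes at the minimizer
  have hdfstar : df xstar = 0 := by
    by_contra hne
    have hnorm : 0 < ‖df xstar‖ ^ 2 := by
      have := norm_pos_iff.mpr hne
      positivity
    set w : EuclideanSpace ℝ (Fin d) := xstar - L⁻¹ • df xstar with hw
    have h1 := (hfs w xstar).2
    have h2 := hmin w
    have hws : w - xstar = -(L⁻¹ • df xstar) := by rw [hw]; abel
    have hi : ⟪df xstar, w - xstar⟫_ℝ = -(L⁻¹ * ‖df xstar‖ ^ 2) := by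
      rw [hws, inner_neg_right, real_inner_smul_right, real_inner_self_eq_norm_sq]
    have hn : ‖w - xstar‖ ^ 2 = L⁻¹ ^ 2 * ‖df xstar‖ ^ 2 := by
      rw [hws, norm_neg, norm_smul, mul_pow, Real.norm_eq_abs, sq_abs]
    rw [hi, hn] at h1
    have hLL : L / 2 * (L⁻¹ ^ 2 * ‖df xstar‖ ^ 2) = L⁻¹ / 2 * ‖df xstar‖ ^ 2 := by
      field_simp
    rw [hLL] at h1
    have hinvpos : 0 < L⁻¹ := inv_pos.2 hL
    nlinarith [h1, h2, mul_pos hinvpos hnorm]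
  -- second-moment bound on the stochastic gradient
  have key2 : ∀ m, ∫ w, ‖dF (x m) w‖ ^ 2 ∂(D m)
      ≤ 4 * L * (f (x m) - f xstar) + 2 * ∫ w, ‖dF xstar w‖ ^ 2 ∂(D m) := by
    intro m
    have hintR : Integrable (fun w =>
        4 * L * (F (x m) w - F xstar w - ⟪dF xstar w, x m - xstar⟫_ℝ)
          + 2 * ‖dF xstar w‖ ^ 2) (D m) :=
      ((hBregInt m (x m) xstar).const_mul _).add ((hdFsq m xstar).const_mul 2)
    have hintA : Integrable (fun w =>
        4 * L * (F (x m) w - F xstar w - ⟪dF xstar w, x m - xstar⟫_ℝ)) (D m) :=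
      (hBregInt m (x m) xstar).const_mul _
    have hintB : Integrable (fun w => 2 * ‖dF xstar w‖ ^ 2) (D m) :=
      (hdFsq m xstar).const_mul 2
    have hae : ∀ᵐ w ∂(D m), ‖dF (x m) w‖ ^ 2
        ≤ 4 * L * (F (x m) w - F xstar w - ⟪dF xstar w, x m - xstar⟫_ℝ)
          + 2 * ‖dF xstar w‖ ^ 2 := by
      filter_upwards [hsmooth m] with w hw
      have hc := aux_coco hL hw hμ (x m) xstar
      have htri := norm_add_le (dF (x m) w - dF xstar w) (dF xstar w)
      rw [sub_add_cancel] at htri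
      have h2ab : ‖dF (x m) w‖ ^ 2
          ≤ 2 * ‖dF (x m) w - dF xstar w‖ ^ 2 + 2 * ‖dF xstar w‖ ^ 2 := by
        nlinarith [htri, sq_nonneg (‖dF (x m) w - dF xstar w‖ - ‖dF xstar w‖),
          norm_nonneg (dF (x m) w), norm_nonneg (dF (x m) w - dF xstar w),
          norm_nonneg (dF xstar w)]
      linarith [hc, h2ab]
    have hmono := integral_mono_ae (hdFsq m (x m)) hintR hae
    rwa [integral_add hintA hintB, integral_const_mul, integral_const_mul,
      hBregEq m (x m) xstar, hdfstar, inner_zero_left, sub_zero] at hmono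
  -- per-machine one-step bound
  have key3 : ∀ m, ∫ w, ‖(x m - γ • dF (x m) w) - xhat‖ ^ 2 ∂(D m)
      ≤ (1 - γ * μ) * ‖x m - xhat‖ ^ 2 + 2 * γ * (f xhat - f xstar)
        + 2 * γ ^ 2 * ∫ w, ‖dF xstar w‖ ^ 2 ∂(D m) := by
    intro m
    have hpt : ∀ w, ‖(x m - γ • dF (x m) w) - xhat‖ ^ 2
        = ‖x m - xhat‖ ^ 2 - 2 * γ * ⟪dF (x m) w, x m - xhat⟫_ℝ
          + γ ^ 2 * ‖dF (x m) w‖ ^ 2 := by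
      intro w
      rw [sub_right_comm, norm_sub_sq_real, real_inner_smul_right, norm_smul,
        mul_pow, Real.norm_eq_abs, sq_abs, real_inner_comm]
      ring
    have hIeq : ∫ w, ‖(x m - γ • dF (x m) w) - xhat‖ ^ 2 ∂(D m)
        = ‖x m - xhat‖ ^ 2 - 2 * γ * ⟪df (x m), x m - xhat⟫_ℝ
          + γ ^ 2 * ∫ w, ‖dF (x m) w‖ ^ 2 ∂(D m) := by
      have hiA : Integrable (fun w =>
          ‖x m - xhat‖ ^ 2 - 2 * γ * ⟪dF (x m) w, x m - xhat⟫_ℝ) (D m) :=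
        (integrable_const _).sub ((hinner_int m (x m) _).const_mul _)
      have hiB : Integrable (fun w => γ ^ 2 * ‖dF (x m) w‖ ^ 2) (D m) :=
        (hdFsq m (x m)).const_mul _
      have hiC : Integrable (fun w => 2 * γ * ⟪dF (x m) w, x m - xhat⟫_ℝ) (D m) :=
        (hinner_int m (x m) _).const_mul _
      simp_rw [hpt]
      rw [integral_add hiA hiB, integral_sub (integrable_const _) hiC,
        integral_const_mul, integral_const_mul, hinner_eq m (x m) _,
        integral_const, probReal_univ, one_smul]
    rw [hIeq]
    have hlow := (hfs xhat (x m)).1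
    have hxm : xhat - x m = -(x m - xhat) := by abel
    rw [hxm, inner_neg_right, norm_neg] at hlow
    have h2 := key2 m
    have hmin' := hmin (x m)
    have hγL : γ * (2 * L) ≤ 1 := (le_div_iff₀ (by positivity)).mp hγ
    have hS : 0 ≤ ∫ w, ‖dF xstar w‖ ^ 2 ∂(D m) :=
      integral_nonneg fun w => by positivity
    have ha := mul_le_mul_of_nonneg_left h2 (sq_nonneg γ)
    have hb : γ ^ 2 * (4 * L * (f (x m) - f xstar)) ≤ 2 * γ * (f (x m) - f xstar) := by
      nlinarith [mul_nonneg (mul_nonneg hγ0.le (sub_nonneg.2 hmin')) (sub_nonneg.2 hγL)]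
    have hc := mul_le_mul_of_nonneg_left hlow (by positivity : (0:ℝ) ≤ 2 * γ)
    linarith [ha, hb, hc]
  -- pull the expectation over Ω back to the D m's and assemble
  have hTmeas : ∀ m, Measurable (fun ω => ‖(x m - γ • dF (x m) (z m ω)) - xhat‖ ^ 2) := by
    intro m
    have h1 : Measurable (fun ω => dF (x m) (z m ω)) := (hdFmeas (x m)).comp (hz m)
    exact ((measurable_const.sub (h1.const_smul γ)).sub measurable_const).norm.pow
      measurable_const
  have hsqP : ∀ m, Integrable (fun ω => ‖dF (x m) (z m ω)‖ ^ 2) P := by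
    intro m
    have h1 : Integrable (fun w => ‖dF (x m) w‖ ^ 2) (P.map (z m)) := by
      rw [hlaw m]; exact hdFsq m (x m)
    exact (integrable_map_measure ((hdFmeas (x m)).norm.pow
      measurable_const).aestronglyMeasurable (hz m).aemeasurable).mp h1
  have hTint : ∀ m, Integrable (fun ω => ‖(x m - γ • dF (x m) (z m ω)) - xhat‖ ^ 2) P := by
    intro m
    refine Integrable.mono' ((integrable_const (2 * ‖x m - xhat‖ ^ 2)).add
      ((hsqP m).const_mul (2 * γ ^ 2))) (hTmeas m).aestronglyMeasurable ?_
    filter_upwards with ω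
    simp only [Pi.add_apply]
    rw [Real.norm_eq_abs, abs_of_nonneg (by positivity)]
    have h1 : ‖(x m - γ • dF (x m) (z m ω)) - xhat‖
        ≤ ‖x m - xhat‖ + |γ| * ‖dF (x m) (z m ω)‖ := by
      rw [sub_right_comm]
      calc ‖(x m - xhat) - γ • dF (x m) (z m ω)‖
          ≤ ‖x m - xhat‖ + ‖γ • dF (x m) (z m ω)‖ := norm_sub_le _ _
        _ = ‖x m - xhat‖ + |γ| * ‖dF (x m) (z m ω)‖ := by
            rw [norm_smul, Real.norm_eq_abs]
    nlinarith [norm_nonneg ((x m - γ • dF (x m) (z m ω)) - xhat), sq_abs γ,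
      sq_nonneg (‖x m - xhat‖ - |γ| * ‖dF (x m) (z m ω)‖), h1,
      norm_nonneg (x m - xhat), abs_nonneg γ, norm_nonneg (dF (x m) (z m ω))]
  have hchg : ∀ m, ∫ ω, ‖(x m - γ • dF (x m) (z m ω)) - xhat‖ ^ 2 ∂P
      = ∫ w, ‖(x m - γ • dF (x m) w) - xhat‖ ^ 2 ∂(D m) := by
    intro m
    rw [← hlaw m, integral_map (hz m).aemeasurable]
    exact (((measurable_const.sub ((hdFmeas (x m)).const_smul γ)).sub
      measurable_const).norm.pow measurable_const).aestronglyMeasurable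
  -- main chain
  have hGint : Integrable (fun ω => (M : ℝ)⁻¹
      * ∑ m, ‖(x m - γ • dF (x m) (z m ω)) - xhat‖ ^ 2) P :=
    (integrable_finset_sum univ fun m _ => hTint m).const_mul _
  have step1 : (∫ ω, (M : ℝ)⁻¹ * ∑ m, ‖(x m - γ • dF (x m) (z m ω)) -
        (M : ℝ)⁻¹ • ∑ j, (x j - γ • dF (x j) (z j ω))‖ ^ 2 ∂P)
      ≤ ∫ ω, (M : ℝ)⁻¹ * ∑ m, ‖(x m - γ • dF (x m) (z m ω)) - xhat‖ ^ 2 ∂P := by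
    refine integral_mono_of_nonneg ?_ hGint ?_
    · filter_upwards with ω
      positivity
    · filter_upwards with ω
      exact mul_le_mul_of_nonneg_left
        (aux_var_le hM (fun j => x j - γ • dF (x j) (z j ω)) xhat)
        (by positivity)
  have step2 : (∫ ω, (M : ℝ)⁻¹ * ∑ m, ‖(x m - γ • dF (x m) (z m ω)) - xhat‖ ^ 2 ∂P)
      = (M : ℝ)⁻¹ * ∑ m, ∫ w, ‖(x m - γ • dF (x m) w) - xhat‖ ^ 2 ∂(D m) := by
    rw [integral_const_mul, integral_finset_sum univ fun m _ => hTint m]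
    congr 1
    exact Finset.sum_congr rfl fun m _ => hchg m
  have step3 : (M : ℝ)⁻¹ * ∑ m, ∫ w, ‖(x m - γ • dF (x m) w) - xhat‖ ^ 2 ∂(D m)
      ≤ (M : ℝ)⁻¹ * ∑ m, ((1 - γ * μ) * ‖x m - xhat‖ ^ 2 + 2 * γ * (f xhat - f xstar)
        + 2 * γ ^ 2 * ∫ w, ‖dF xstar w‖ ^ 2 ∂(D m)) :=
    mul_le_mul_of_nonneg_left (Finset.sum_le_sum fun m _ => key3 m) (by positivity)
  have step4 : (M : ℝ)⁻¹ * ∑ m, ((1 - γ * μ) * ‖x m - xhat‖ ^ 2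
        + 2 * γ * (f xhat - f xstar) + 2 * γ ^ 2 * ∫ w, ‖dF xstar w‖ ^ 2 ∂(D m))
      = (1 - γ * μ) * Vdev + 2 * γ * (f xhat - f xstar) + 2 * γ ^ 2 * sopt2 := by
    rw [hV, hsopt2, aux_sum_split]
    field_simp
  calc (∫ ω, (M : ℝ)⁻¹ * ∑ m, ‖(x m - γ • dF (x m) (z m ω)) -
        (M : ℝ)⁻¹ • ∑ j, (x j - γ • dF (x j) (z j ω))‖ ^ 2 ∂P)
      ≤ ∫ ω, (M : ℝ)⁻¹ * ∑ m, ‖(x m - γ • dF (x m) (z m ω)) - xhat‖ ^ 2 ∂P := step1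
    _ = (M : ℝ)⁻¹ * ∑ m, ∫ w, ‖(x m - γ • dF (x m) w) - xhat‖ ^ 2 ∂(D m) := step2
    _ ≤ (M : ℝ)⁻¹ * ∑ m, ((1 - γ * μ) * ‖x m - xhat‖ ^ 2 + 2 * γ * (f xhat - f xstar)
        + 2 * γ ^ 2 * ∫ w, ‖dF xstar w‖ ^ 2 ∂(D m)) := step3
    _ = (1 - γ * μ) * Vdev + 2 * γ * (f xhat - f xstar) + 2 * γ ^ 2 * sopt2 := step4
end
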